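/- arXiv:1907.01315 — 3 statements merged into one kernel-verified Lean document; each statement's English description precedes it below -/
import Mathlib

section
/- Let S' ⊆ ℕ² be a local good semigroup with S' ≠ ℕ²(1,1) and suppose the Frobenius vector f(S') belongs to S'. Then S' has exactly one special parent, namely S = S' ∪ Δ(f(S')). -/
/-- The ambient space `ℤ²`; `ℕ²` is identified with the nonnegative orthant. -/
abbrev Z2 : Type := ℤ × ℤ

/-- The nonnegative orthant, representing `ℕ² ⊆ ℤ²`. -/
def orth : Set Z2 := {a : Z2 | 0 ≤ a.1 ∧ 0 ≤ a.2}

/-- Property (G1): closure under componentwise minimum. -/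
def MinClosed (E : Set Z2) : Prop := ∀ a ∈ E, ∀ b ∈ E, a ⊓ b ∈ E

/-- Property (G3). -/
def G3P (E : Set Z2) : Prop :=
  ∀ a ∈ E, ∀ b ∈ E, a ≠ b →
    (a.1 = b.1 →
      ∃ e ∈ E, a.1 < e.1 ∧ min a.2 b.2 ≤ e.2 ∧ (a.2 ≠ b.2 → e.2 = min a.2 b.2)) ∧
    (a.2 = b.2 →
      ∃ e ∈ E, a.2 < e.2 ∧ min a.1 b.1 ≤ e.1 ∧ (a.1 ≠ b.1 → e.1 = min a.1 b.1))

/-- A good semigroup of `ℕ²` (viewed inside `ℤ²`). -/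
def IsGood (S : Set Z2) : Prop :=
  S ⊆ orth ∧ (0 : Z2) ∈ S ∧ (∀ a ∈ S, ∀ b ∈ S, a + b ∈ S) ∧
  MinClosed S ∧ (∃ δ : Z2, ∀ y : Z2, δ ≤ y → y ∈ S) ∧ G3P S

/-- A good semigroup is local if its only element with a zero coordinate is `0`. -/
def IsLocal (S : Set Z2) : Prop := ∀ a ∈ S, (a.1 = 0 ∨ a.2 = 0) → a = 0

/-- A relative good ideal of `S`. -/
def IsRelGoodIdeal (S E : Set Z2) : Prop :=
  E.Nonempty ∧ (∀ e ∈ E, ∀ s ∈ S, e + s ∈ E) ∧ (∃ a ∈ S, ∀ e ∈ E, a + e ∈ S) ∧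
  MinClosed E ∧ G3P E

/-- A saturated chain of length `n` in `E`. -/
def IsSatChain (E : Set Z2) (n : ℕ) (f : ℕ → Z2) : Prop :=
  (∀ i ≤ n, f i ∈ E) ∧ (∀ i < n, f i < f (i + 1)) ∧
  (∀ i < n, ∀ c ∈ E, ¬ (f i < c ∧ c < f (i + 1)))

/-- `d_E(a,b)`: the common length of all saturated chains in `E` from `a` to `b`. -/
noncomputable def chainDist (E : Set Z2) (a b : Z2) : ℕ :=
  sSup {n : ℕ | ∃ f : ℕ → Z2, IsSatChain E n f ∧ f 0 = a ∧ f n = b}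

/-- The (componentwise) minimal element `e(E)` of `E`. -/
noncomputable def minEl (E : Set Z2) : Z2 :=
  (sInf (Prod.fst '' E), sInf (Prod.snd '' E))

/-- The distance `d(E∖F)` between `F ⊆ E`: the common value of
`d_E(e(E),α) - d_F(e(F),α)` for all sufficiently large `α ∈ F`. -/
noncomputable def dist2 (E F : Set Z2) : ℤ :=
  sSup {z : ℤ | ∃ β : Z2, ∀ α ∈ F, β ≤ α →
    (chainDist E (minEl E) α : ℤ) - (chainDist F (minEl F) α : ℤ) = z}

/-- The conductor `c(E)`: the componentwise minimal `δ` with `δ + ℕ² ⊆ E`. -/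
noncomputable def condE (E : Set Z2) : Z2 :=
  (sInf ((fun δ : Z2 => δ.1) '' {δ : Z2 | ∀ y : Z2, δ ≤ y → y ∈ E}),
   sInf ((fun δ : Z2 => δ.2) '' {δ : Z2 | ∀ y : Z2, δ ≤ y → y ∈ E}))

/-- The conductor ideal `C(E) = {β ∈ E : β ≥ c(E)}`. -/
noncomputable def CIdeal (E : Set Z2) : Set Z2 := {b ∈ E | condE E ≤ b}

/-- The length `l(E) = d(E ∖ C(E))`. -/
noncomputable def glen (E : Set Z2) : ℤ := dist2 E (CIdeal E)

/-- The genus `g(E) = d(ℕ² ∖ E)`. -/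
noncomputable def genus (E : Set Z2) : ℤ := dist2 orth E

/-- The good semigroup `ℕ²(1,1) = {0} ∪ ((1,1) + ℕ²)`. -/
def N2oneone : Set Z2 := {a : Z2 | a = 0 ∨ ((1 : ℤ), (1 : ℤ)) ≤ a}
/-- The space `(ℕ ∪ {∞})²`, modelled inside `(ℤ ∪ {∞})²`. -/
abbrev Om : Type := WithTop ℤ × WithTop ℤ

/-- The embedding of `ℤ²` into `(ℤ ∪ {∞})²`. -/
def iotaZ (a : Z2) : Om := ((a.1 : WithTop ℤ), (a.2 : WithTop ℤ))

/-- `S^∞`: the elements `(a,∞)` with `(a,c₂) ∈ S` and `(∞,b)` with `(c₁,b) ∈ S`,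
where `(c₁,c₂)` is the conductor of `S`. -/
noncomputable def Sinf (S : Set Z2) : Set Om :=
  {w : Om | (∃ a : ℤ, w = ((a : WithTop ℤ), ⊤) ∧ (a, (condE S).2) ∈ S) ∨
            (∃ b : ℤ, w = (⊤, (b : WithTop ℤ)) ∧ ((condE S).1, b) ∈ S)}

/-- `Γ_S = S ∪ S^∞`. -/
noncomputable def Gam (S : Set Z2) : Set Om := iotaZ '' S ∪ Sinf S

/-- `I(S)`: the set of irreducible elements of `Γ_S`. -/
noncomputable def ISet (S : Set Z2) : Set Om :=
  {w ∈ Gam S | w ≠ 0 ∧ ∀ b ∈ Gam S, ∀ c ∈ Gam S, w = b + c → w = b ∨ w = c}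

/-- `Δ(a) = Δ₁(a) ∪ Δ₂(a)` for a finite element `a ∈ ℤ²`. -/
def DeltaUp (a : Z2) : Set Z2 :=
  {b : Z2 | (b.1 = a.1 ∧ a.2 < b.2) ∨ (b.2 = a.2 ∧ a.1 < b.1)}

/-- `A_f(S)`: the finite maximals of `S`, i.e. `a ∈ S` with `Δ^S(a) = ∅`. -/
def Af (S : Set Z2) : Set Z2 := {a ∈ S | S ∩ DeltaUp a = ∅}

/-- `I_A(S)`: the irreducible maximals, i.e. irreducible elements of
`A(S) = A_f(S) ∪ S^∞`. -/
noncomputable def IA (S : Set Z2) : Set Om := ISet S ∩ (iotaZ '' Af S ∪ Sinf S)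

/-- `₁Δ(w)` (as a subset of `ℤ²`), including the conventions for infinite `w`. -/
def lowD1 (w : Om) : Set Z2 :=
  {b : Z2 | (b.1 : WithTop ℤ) = w.1 ∧ (b.2 : WithTop ℤ) < w.2}

/-- `₂Δ(w)` (as a subset of `ℤ²`), including the conventions for infinite `w`. -/
def lowD2 (w : Om) : Set Z2 :=
  {b : Z2 | (b.2 : WithTop ℤ) = w.2 ∧ (b.1 : WithTop ℤ) < w.1}

/-- `Δ(w)` (as a subset of `ℤ²`) for a possibly infinite `w`. -/
def upD (w : Om) : Set Z2 :=
  {b : Z2 | ((b.1 : WithTop ℤ) = w.1 ∧ w.2 < (b.2 : WithTop ℤ)) ∨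
            ((b.2 : WithTop ℤ) = w.2 ∧ w.1 < (b.1 : WithTop ℤ))}

/-- `{w} ∩ ℤ²`: the singleton of `w` if `w` is finite, `∅` otherwise. -/
def finPart (w : Om) : Set Z2 := {b : Z2 | iotaZ b = w}

/-- `a` and `b` are connected by a piece of track. -/
def Piece (S : Set Z2) (a b : Om) : Prop :=
  ¬ a ≤ b ∧ ¬ b ≤ a ∧ ∀ s ∈ S, s ∈ upD (a ⊓ b) → iotaZ s ∈ ISet S

/-- The data `α 0, …, α (n-1)` of a track of `S` (with `n ≥ 1` points;
`n = 1` gives the one-point tracks `T((α))`). -/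
def TrackData (S : Set Z2) (n : ℕ) (α : ℕ → Om) : Prop :=
  1 ≤ n ∧ (∀ i < n, α i ∈ IA S) ∧
  (∀ i j, i < j → j < n → (α i).1 < (α j).1) ∧
  (∀ s ∈ S, s ∈ lowD2 (α 0) → iotaZ s ∈ ISet S) ∧
  (∀ s ∈ S, s ∈ lowD1 (α (n - 1)) → iotaZ s ∈ ISet S) ∧
  (∀ i, i + 1 < n → Piece S (α i) (α (i + 1)))

/-- The track `T((α 0,…,α (n-1)))` as a subset of `S`. -/
def trackSet (S : Set Z2) (n : ℕ) (α : ℕ → Om) : Set Z2 :=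
  finPart (α 0) ∪ S ∩ lowD2 (α 0) ∪
  (⋃ i ∈ Finset.range (n - 1), S ∩ upD (α i ⊓ α (i + 1))) ∪
  S ∩ lowD1 (α (n - 1)) ∪ finPart (α (n - 1))

/-- `T` is a track of `S`. -/
def IsTrack (S T : Set Z2) : Prop :=
  ∃ (n : ℕ) (α : ℕ → Om), TrackData S n α ∧ T = trackSet S n α

/-- `T` is a beyond track of `S`: a track meeting `{a ∈ S : a ≥ c(S)}`. -/
noncomputable def IsBeyondTrack (S T : Set Z2) : Prop :=
  IsTrack S T ∧ (T ∩ {a ∈ S | condE S ≤ a}).Nonempty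

/-- `S` is a special parent of `S'`: `S` is a (local) good semigroup and
`S' = S ∖ T` for some beyond track `T` of `S`. -/
noncomputable def SpecialParent (S S' : Set Z2) : Prop :=
  IsGood S ∧ IsLocal S ∧ ∃ T : Set Z2, IsBeyondTrack S T ∧ S' = S \ T

section Machinery

def condSet (E : Set Z2) : Set Z2 := {δ : Z2 | ∀ y : Z2, δ ≤ y → y ∈ E}

lemma condE_eq (E : Set Z2) :
    condE E = (sInf ((fun δ : Z2 => δ.1) '' condSet E),
               sInf ((fun δ : Z2 => δ.2) '' condSet E)) := rfl

lemma self_mem_of_condSet {E : Set Z2} {δ : Z2} (h : δ ∈ condSet E) : δ ∈ E := h δ le_rfl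

lemma inf_mem_condSet {E : Set Z2} (hmin : MinClosed E) {δ δ' : Z2}
    (h : δ ∈ condSet E) (h' : δ' ∈ condSet E) : δ ⊓ δ' ∈ condSet E := by
  intro y hy
  rw [Prod.le_def] at hy
  have hy1 : min δ.1 δ'.1 ≤ y.1 := hy.1
  have hy2 : min δ.2 δ'.2 ≤ y.2 := hy.2
  have ha : (y.1, max y.2 (max δ.2 δ'.2)) ∈ E := by
    rcases le_total δ.1 δ'.1 with hc | hc
    · exact h _ (Prod.le_def.2 ⟨by omega, by omega⟩)
    · exact h' _ (Prod.le_def.2 ⟨by omega, by omega⟩)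
  have hb : (max y.1 (max δ.1 δ'.1), y.2) ∈ E := by
    rcases le_total δ.2 δ'.2 with hc | hc
    · exact h _ (Prod.le_def.2 ⟨by omega, by omega⟩)
    · exact h' _ (Prod.le_def.2 ⟨by omega, by omega⟩)
  have := hmin _ ha _ hb
  have hEq : ((y.1, max y.2 (max δ.2 δ'.2)) : Z2) ⊓ (max y.1 (max δ.1 δ'.1), y.2) = y := by
    have : ((y.1, max y.2 (max δ.2 δ'.2)) : Z2) ⊓ (max y.1 (max δ.1 δ'.1), y.2)
        = (min y.1 (max y.1 (max δ.1 δ'.1)), min (max y.2 (max δ.2 δ'.2)) y.2) := rfl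
    rw [this]
    have e1 : min y.1 (max y.1 (max δ.1 δ'.1)) = y.1 := by omega
    have e2 : min (max y.2 (max δ.2 δ'.2)) y.2 = y.2 := by omega
    rw [e1, e2]
  rwa [hEq] at this

lemma condSet_fst_nonneg {E : Set Z2} (hE : E ⊆ orth) :
    ∀ x ∈ (fun δ : Z2 => δ.1) '' condSet E, (0:ℤ) ≤ x := by
  rintro x ⟨δ, hδ, rfl⟩
  exact (hE (self_mem_of_condSet hδ)).1

lemma condSet_snd_nonneg {E : Set Z2} (hE : E ⊆ orth) :
    ∀ x ∈ (fun δ : Z2 => δ.2) '' condSet E, (0:ℤ) ≤ x := by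
  rintro x ⟨δ, hδ, rfl⟩
  exact (hE (self_mem_of_condSet hδ)).2

lemma condE_mem_condSet {E : Set Z2} (hg : IsGood E) : condE E ∈ condSet E := by
  obtain ⟨δ0, hδ0⟩ := hg.2.2.2.2.1
  have hδ0' : δ0 ∈ condSet E := hδ0
  have hne1 : ((fun δ : Z2 => δ.1) '' condSet E).Nonempty := ⟨δ0.1, δ0, hδ0', rfl⟩
  have hne2 : ((fun δ : Z2 => δ.2) '' condSet E).Nonempty := ⟨δ0.2, δ0, hδ0', rfl⟩
  have hb1 : BddBelow ((fun δ : Z2 => δ.1) '' condSet E) := ⟨0, fun x hx => condSet_fst_nonneg hg.1 x hx⟩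
  have hb2 : BddBelow ((fun δ : Z2 => δ.2) '' condSet E) := ⟨0, fun x hx => condSet_snd_nonneg hg.1 x hx⟩
  obtain ⟨δa, hδa, ha⟩ := Int.csInf_mem hne1 hb1
  obtain ⟨δb, hδb, hb⟩ := Int.csInf_mem hne2 hb2
  have hmem := inf_mem_condSet hg.2.2.2.1 hδa hδb
  have h1 : sInf ((fun δ : Z2 => δ.1) '' condSet E) ≤ δb.1 := csInf_le hb1 ⟨δb, hδb, rfl⟩
  have h2 : sInf ((fun δ : Z2 => δ.2) '' condSet E) ≤ δa.2 := csInf_le hb2 ⟨δa, hδa, rfl⟩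
  have : condE E = δa ⊓ δb := by
    rw [condE_eq]
    have : δa ⊓ δb = (min δa.1 δb.1, min δa.2 δb.2) := rfl
    rw [this]
    have ha' : δa.1 = sInf ((fun δ : Z2 => δ.1) '' condSet E) := ha
    have hb' : δb.2 = sInf ((fun δ : Z2 => δ.2) '' condSet E) := hb
    refine Prod.ext ?_ ?_
    · show sInf ((fun δ : Z2 => δ.1) '' condSet E) = min δa.1 δb.1
      omega
    · show sInf ((fun δ : Z2 => δ.2) '' condSet E) = min δa.2 δb.2
      omega
  rw [this]; exact hmem

lemma condE_valid {E : Set Z2} (hg : IsGood E) : ∀ y : Z2, condE E ≤ y → y ∈ E :=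
  condE_mem_condSet hg

lemma condE_le {E : Set Z2} (hE : E ⊆ orth) {δ : Z2} (h : δ ∈ condSet E) : condE E ≤ δ := by
  rw [condE_eq, Prod.le_def]
  constructor
  · exact csInf_le ⟨0, fun x hx => condSet_fst_nonneg hE x hx⟩ ⟨δ, h, rfl⟩
  · exact csInf_le ⟨0, fun x hx => condSet_snd_nonneg hE x hx⟩ ⟨δ, h, rfl⟩

lemma good_pos {E : Set Z2} (hg : IsGood E) (hl : IsLocal E) {a : Z2} (ha : a ∈ E)
    (h0 : a ≠ 0) : 1 ≤ a.1 ∧ 1 ≤ a.2 := by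
  have horth := hg.1 ha
  have h1 : a.1 ≠ 0 := fun h => h0 (hl a ha (Or.inl h))
  have h2 : a.2 ≠ 0 := fun h => h0 (hl a ha (Or.inr h))
  exact ⟨by have := horth.1; omega, by have := horth.2; omega⟩

lemma condE_pos {E : Set Z2} (hg : IsGood E) (hl : IsLocal E) :
    1 ≤ (condE E).1 ∧ 1 ≤ (condE E).2 := by
  constructor
  · by_contra h
    have hp : ((0 : ℤ), max (condE E).2 1) ∈ E :=
      condE_valid hg _ (Prod.le_def.2 ⟨by omega, by omega⟩)
    have := hl _ hp (Or.inl rfl)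
    have : (max (condE E).2 1 : ℤ) = 0 := congrArg Prod.snd this
    omega
  · by_contra h
    have hp : ((max (condE E).1 1 : ℤ), (0:ℤ)) ∈ E :=
      condE_valid hg _ (Prod.le_def.2 ⟨by omega, by omega⟩)
    have := hl _ hp (Or.inr rfl)
    have : (max (condE E).1 1 : ℤ) = 0 := congrArg Prod.fst this
    omega

lemma columnFull {E : Set Z2} (hg : IsGood E) {a y0 : ℤ} (h : (a, y0) ∈ E)
    (hy0 : (condE E).2 ≤ y0) : ∀ y, y0 ≤ y → (a, y) ∈ E := by
  refine fun y hy => Int.le_induction (motive := fun y _ => (a, y) ∈ E) ?_ ?_ y hy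
  · exact h
  · intro y hy ih
    have h1 : ((max (a+1) (condE E).1 : ℤ), y) ∈ E :=
      condE_valid hg _ (Prod.le_def.2 ⟨by simp only; omega, by simp only; omega⟩)
    have h2 : ((max (a+1) (condE E).1 : ℤ), y+1) ∈ E :=
      condE_valid hg _ (Prod.le_def.2 ⟨by simp only; omega, by simp only; omega⟩)
    have hne : ((a, y) : Z2) ≠ (max (a+1) (condE E).1, y) := by
      intro hcontra
      have : a = max (a+1) (condE E).1 := congrArg Prod.fst hcontra
      omega
    obtain ⟨e, he, he2, _, he4⟩ := (hg.2.2.2.2.2 _ ih _ h1 hne).2 rfl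
    have he1 : e.1 = a := by
      have := he4 (by simp only; omega)
      simp only at this
      omega
    have hm := hg.2.2.2.1 _ he _ h2
    have heq : e ⊓ ((max (a+1) (condE E).1 : ℤ), y+1) = ((a, y+1) : Z2) := by
      have hq : e ⊓ (((max (a+1) (condE E).1 : ℤ), y+1) : Z2)
          = (min e.1 (max (a+1) (condE E).1), min e.2 (y+1)) := rfl
      rw [hq]
      refine Prod.ext ?_ ?_
      · simp only; omega
      · simp only at he2 ⊢; omega
    rwa [heq] at hm

lemma rowFull {E : Set Z2} (hg : IsGood E) {b x0 : ℤ} (h : (x0, b) ∈ E)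
    (hx0 : (condE E).1 ≤ x0) : ∀ x, x0 ≤ x → (x, b) ∈ E := by
  refine fun x hx => Int.le_induction (motive := fun x _ => (x, b) ∈ E) ?_ ?_ x hx
  · exact h
  · intro x hx ih
    have h1 : ((x : ℤ), (max (b+1) (condE E).2 : ℤ)) ∈ E :=
      condE_valid hg _ (Prod.le_def.2 ⟨by simp only; omega, by simp only; omega⟩)
    have h2 : ((x+1 : ℤ), (max (b+1) (condE E).2 : ℤ)) ∈ E :=
      condE_valid hg _ (Prod.le_def.2 ⟨by simp only; omega, by simp only; omega⟩)
    have hne : ((x, b) : Z2) ≠ (x, max (b+1) (condE E).2) := by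
      intro hcontra
      have : b = max (b+1) (condE E).2 := congrArg Prod.snd hcontra
      omega
    obtain ⟨e, he, he2, _, he4⟩ := (hg.2.2.2.2.2 _ ih _ h1 hne).1 rfl
    have he1 : e.2 = b := by
      have := he4 (by simp only; omega)
      simp only at this
      omega
    have hm := hg.2.2.2.1 _ he _ h2
    have heq : e ⊓ ((x+1 : ℤ), (max (b+1) (condE E).2 : ℤ)) = ((x+1, b) : Z2) := by
      have hq : e ⊓ (((x+1 : ℤ), (max (b+1) (condE E).2 : ℤ)) : Z2)
          = (min e.1 (x+1), min e.2 (max (b+1) (condE E).2)) := rfl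
      rw [hq]
      refine Prod.ext ?_ ?_
      · simp only at he2 ⊢; omega
      · simp only; omega
    rwa [heq] at hm

end Machinery
section Context

lemma sub_fst (a b : Z2) : (a - b).1 = a.1 - b.1 := rfl
lemma sub_snd (a b : Z2) : (a - b).2 = a.2 - b.2 := rfl
lemma add_fst (a b : Z2) : (a + b).1 = a.1 + b.1 := rfl
lemma add_snd (a b : Z2) : (a + b).2 = a.2 + b.2 := rfl
lemma inf_fst (a b : Z2) : (a ⊓ b).1 = min a.1 b.1 := rfl
lemma inf_snd (a b : Z2) : (a ⊓ b).2 = min a.2 b.2 := rfl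

lemma mem_deltaUp {a p : Z2} :
    p ∈ DeltaUp a ↔ (p.1 = a.1 ∧ a.2 < p.2) ∨ (p.2 = a.2 ∧ a.1 < p.1) := Iff.rfl

variable {S' : Set Z2}

lemma two_le_cond (hS' : IsGood S') (hl' : IsLocal S') (hne : S' ≠ N2oneone)
    (hf : condE S' - ((1 : ℤ), (1 : ℤ)) ∈ S') :
    2 ≤ (condE S').1 ∧ 2 ≤ (condE S').2 := by
  by_cases hf0 : condE S' - ((1 : ℤ), (1 : ℤ)) = 0
  · exfalso
    apply hne
    have hc1 : (condE S').1 = 1 := by have := congrArg Prod.fst hf0; simp [sub_fst] at this; omega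
    have hc2 : (condE S').2 = 1 := by have := congrArg Prod.snd hf0; simp [sub_snd] at this; omega
    ext a
    constructor
    · intro ha
      by_cases h0 : a = 0
      · exact Or.inl h0
      · exact Or.inr (Prod.le_def.2 ⟨(good_pos hS' hl' ha h0).1, (good_pos hS' hl' ha h0).2⟩)
    · rintro (rfl | hle)
      · exact hS'.2.1
      · exact condE_valid hS' a (Prod.le_def.2 ⟨by rw [hc1]; exact hle.1, by rw [hc2]; exact hle.2⟩)
  · have hp := good_pos hS' hl' hf hf0
    rw [sub_fst, sub_snd] at hp
    simp only at hp
    omega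

/-- `Δ(f) ∩ S' = ∅` : key lemma. -/
lemma deltaF_not_mem (hS' : IsGood S') {p : Z2}
    (hp : p ∈ DeltaUp (condE S' - ((1 : ℤ), (1 : ℤ)))) : p ∉ S' := by
  intro hps
  rcases hp with ⟨h1, h2⟩ | ⟨h1, h2⟩
  · rw [sub_fst] at h1
    rw [sub_snd] at h2
    simp only at h1 h2
    have hcol : ∀ y, p.2 ≤ y → (p.1, y) ∈ S' := by
      have : ((p.1, p.2) : Z2) ∈ S' := hps
      exact columnFull hS' this (by omega)
    have hcs : p ∈ condSet S' := by
      intro y hy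
      rw [Prod.le_def] at hy
      by_cases hy1 : y.1 = p.1
      · have := hcol y.2 hy.2
        rwa [show ((p.1, y.2) : Z2) = y from Prod.ext hy1.symm rfl] at this
      · exact condE_valid hS' y (Prod.le_def.2 ⟨by have := hy.1; omega, by have := hy.2; omega⟩)
    have := (condE_le hS'.1 hcs).1
    omega
  · rw [sub_snd] at h1
    rw [sub_fst] at h2
    simp only at h1 h2
    have hrow : ∀ x, p.1 ≤ x → (x, p.2) ∈ S' := by
      have : ((p.1, p.2) : Z2) ∈ S' := hps
      exact rowFull hS' this (by omega)
    have hcs : p ∈ condSet S' := by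
      intro y hy
      rw [Prod.le_def] at hy
      by_cases hy2 : y.2 = p.2
      · have := hrow y.1 hy.1
        rwa [show ((y.1, p.2) : Z2) = y from Prod.ext rfl hy2.symm] at this
      · exact condE_valid hS' y (Prod.le_def.2 ⟨by have := hy.1; omega, by have := hy.2; omega⟩)
    have := (condE_le hS'.1 hcs).2
    omega

end Context
section Construct

variable {S' : Set Z2}

lemma mem_deltaF {p : Z2} :
    p ∈ DeltaUp (condE S' - ((1 : ℤ), (1 : ℤ))) ↔
      (p.1 = (condE S').1 - 1 ∧ (condE S').2 - 1 < p.2) ∨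
      (p.2 = (condE S').2 - 1 ∧ (condE S').1 - 1 < p.1) := Iff.rfl

lemma hv' (hS' : IsGood S') {x y : ℤ} (h1 : (condE S').1 ≤ x) (h2 : (condE S').2 ≤ y) :
    ((x, y) : Z2) ∈ S' := condE_valid hS' _ (Prod.le_def.2 ⟨h1, h2⟩)

lemma fmem (hf : condE S' - ((1 : ℤ), (1 : ℤ)) ∈ S') :
    (((condE S').1 - 1, (condE S').2 - 1) : Z2) ∈ S' := hf

lemma min_mem_SD (hS' : IsGood S') (hf : condE S' - ((1 : ℤ), (1 : ℤ)) ∈ S')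
    {a b : Z2} (ha : a ∈ S') (hb : b ∈ DeltaUp (condE S' - ((1 : ℤ), (1 : ℤ)))) :
    a ⊓ b ∈ S' ∪ DeltaUp (condE S' - ((1 : ℤ), (1 : ℤ))) := by
  rcases mem_deltaF.1 hb with ⟨hb1, hb2⟩ | ⟨hb1, hb2⟩
  · rcases le_or_gt a.1 b.1 with h1 | h1 <;> rcases le_or_gt a.2 b.2 with h2 | h2
    · have he : a ⊓ b = a := Prod.ext (by simp only [inf_fst, inf_snd]; try omega) (by simp only [inf_fst, inf_snd]; try omega)
      rw [he]; exact Or.inl ha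
    · by_cases he : a.1 = (condE S').1 - 1
      · refine Or.inr (mem_deltaF.2 (Or.inl ⟨?_, ?_⟩))
        · simp only [inf_fst, inf_snd]; try omega
        · simp only [inf_fst, inf_snd]; try omega
      · have hx : (((condE S').1, b.2) : Z2) ∈ S' := hv' hS' le_rfl (by omega)
        have hm := hS'.2.2.2.1 a ha _ hx
        have heq : a ⊓ (((condE S').1, b.2) : Z2) = a ⊓ b :=
          Prod.ext (by simp only [inf_fst, inf_snd]; try omega)
            (by simp only [inf_fst, inf_snd]; try omega)
        rw [← heq]; exact Or.inl hm
    · by_cases he : a.2 = (condE S').2 - 1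
      · have heq : a ⊓ b = (((condE S').1 - 1, (condE S').2 - 1) : Z2) :=
          Prod.ext (by simp only [inf_fst, inf_snd]; try omega) (by simp only [inf_fst, inf_snd]; try omega)
        rw [heq]; exact Or.inl (fmem hf)
      · rcases lt_or_gt_of_ne he with he' | he'
        · have hm := hS'.2.2.2.1 a ha _ (fmem hf)
          have heq : a ⊓ (((condE S').1 - 1, (condE S').2 - 1) : Z2) = a ⊓ b :=
            Prod.ext (by simp only [inf_fst, inf_snd]; try omega)
              (by simp only [inf_fst, inf_snd]; try omega)
          rw [← heq]; exact Or.inl hm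
        · refine Or.inr (mem_deltaF.2 (Or.inl ⟨?_, ?_⟩))
          · simp only [inf_fst, inf_snd]; try omega
          · simp only [inf_fst, inf_snd]; try omega
    · have he : a ⊓ b = b := Prod.ext (by simp only [inf_fst, inf_snd]; try omega) (by simp only [inf_fst, inf_snd]; try omega)
      rw [he]; exact Or.inr hb
  · rcases le_or_gt a.2 b.2 with h2 | h2 <;> rcases le_or_gt a.1 b.1 with h1 | h1
    · have he : a ⊓ b = a := Prod.ext (by simp only [inf_fst, inf_snd]; try omega) (by simp only [inf_fst, inf_snd]; try omega)
      rw [he]; exact Or.inl ha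
    · by_cases he : a.2 = (condE S').2 - 1
      · refine Or.inr (mem_deltaF.2 (Or.inr ⟨?_, ?_⟩))
        · simp only [inf_fst, inf_snd]; try omega
        · simp only [inf_fst, inf_snd]; try omega
      · have hx : ((b.1, (condE S').2) : Z2) ∈ S' := hv' hS' (by omega) le_rfl
        have hm := hS'.2.2.2.1 a ha _ hx
        have heq : a ⊓ ((b.1, (condE S').2) : Z2) = a ⊓ b :=
          Prod.ext (by simp only [inf_fst, inf_snd]; try omega)
            (by simp only [inf_fst, inf_snd]; try omega)
        rw [← heq]; exact Or.inl hm
    · by_cases he : a.1 = (condE S').1 - 1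
      · have heq : a ⊓ b = (((condE S').1 - 1, (condE S').2 - 1) : Z2) :=
          Prod.ext (by simp only [inf_fst, inf_snd]; try omega) (by simp only [inf_fst, inf_snd]; try omega)
        rw [heq]; exact Or.inl (fmem hf)
      · rcases lt_or_gt_of_ne he with he' | he'
        · have hm := hS'.2.2.2.1 a ha _ (fmem hf)
          have heq : a ⊓ (((condE S').1 - 1, (condE S').2 - 1) : Z2) = a ⊓ b :=
            Prod.ext (by simp only [inf_fst, inf_snd]; try omega)
              (by simp only [inf_fst, inf_snd]; try omega)
          rw [← heq]; exact Or.inl hm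
        · refine Or.inr (mem_deltaF.2 (Or.inr ⟨?_, ?_⟩))
          · simp only [inf_fst, inf_snd]; try omega
          · simp only [inf_fst, inf_snd]; try omega
    · have he : a ⊓ b = b := Prod.ext (by simp only [inf_fst, inf_snd]; try omega) (by simp only [inf_fst, inf_snd]; try omega)
      rw [he]; exact Or.inr hb

lemma min_mem_DD (hS' : IsGood S') (hf : condE S' - ((1 : ℤ), (1 : ℤ)) ∈ S')
    {a b : Z2} (ha : a ∈ DeltaUp (condE S' - ((1 : ℤ), (1 : ℤ))))
    (hb : b ∈ DeltaUp (condE S' - ((1 : ℤ), (1 : ℤ)))) :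
    a ⊓ b ∈ S' ∪ DeltaUp (condE S' - ((1 : ℤ), (1 : ℤ))) := by
  rcases mem_deltaF.1 ha with ⟨ha1, ha2⟩ | ⟨ha1, ha2⟩ <;>
    rcases mem_deltaF.1 hb with ⟨hb1, hb2⟩ | ⟨hb1, hb2⟩
  · refine Or.inr (mem_deltaF.2 (Or.inl ⟨?_, ?_⟩))
    · simp only [inf_fst, inf_snd]; try omega
    · simp only [inf_fst, inf_snd]; try omega
  · have heq : a ⊓ b = (((condE S').1 - 1, (condE S').2 - 1) : Z2) :=
      Prod.ext (by simp only [inf_fst, inf_snd]; try omega) (by simp only [inf_fst, inf_snd]; try omega)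
    rw [heq]; exact Or.inl (fmem hf)
  · have heq : a ⊓ b = (((condE S').1 - 1, (condE S').2 - 1) : Z2) :=
      Prod.ext (by simp only [inf_fst, inf_snd]; try omega) (by simp only [inf_fst, inf_snd]; try omega)
    rw [heq]; exact Or.inl (fmem hf)
  · refine Or.inr (mem_deltaF.2 (Or.inr ⟨?_, ?_⟩))
    · simp only [inf_fst, inf_snd]; try omega
    · simp only [inf_fst, inf_snd]; try omega

end Construct
section G3Bash

variable {S' : Set Z2}

lemma g3one (hS' : IsGood S') (hl' : IsLocal S') (hne : S' ≠ N2oneone)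
    (hf : condE S' - ((1 : ℤ), (1 : ℤ)) ∈ S') :
    ∀ a ∈ S' ∪ DeltaUp (condE S' - ((1 : ℤ), (1 : ℤ))),
    ∀ b ∈ S' ∪ DeltaUp (condE S' - ((1 : ℤ), (1 : ℤ))), a ≠ b → a.1 = b.1 →
    ∃ e ∈ S' ∪ DeltaUp (condE S' - ((1 : ℤ), (1 : ℤ))),
      a.1 < e.1 ∧ min a.2 b.2 ≤ e.2 ∧ (a.2 ≠ b.2 → e.2 = min a.2 b.2) := by
  intro a ha b hb hab h1
  obtain ⟨h2c1, h2c2⟩ := two_le_cond hS' hl' hne hf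
  rcases ha with haS | haD <;> rcases hb with hbS | hbD
  · obtain ⟨e, he, q1, q2, q3⟩ := (hS'.2.2.2.2.2 a haS b hbS hab).1 h1
    exact ⟨e, Or.inl he, q1, q2, q3⟩
  · rcases mem_deltaF.1 hbD with ⟨hb1, hb2⟩ | ⟨hb1, hb2⟩
    · have hb2' : a.2 ≤ (condE S').2 - 1 := by
        by_contra hcon
        exact deltaF_not_mem hS' (mem_deltaF.2 (Or.inl ⟨by omega, by omega⟩)) haS
      by_cases he2 : a.2 = (condE S').2 - 1
      · refine ⟨((condE S').1, (condE S').2 - 1),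
          Or.inr (mem_deltaF.2 (Or.inr ⟨rfl, show (condE S').1 - 1 < (condE S').1 by omega⟩)),
          show a.1 < (condE S').1 by omega,
          show min a.2 b.2 ≤ (condE S').2 - 1 by omega,
          fun _ => show (condE S').2 - 1 = min a.2 b.2 by omega⟩
      · have hne2 : a ≠ (((condE S').1 - 1, (condE S').2 - 1) : Z2) := by
          intro hcon; have := congrArg Prod.snd hcon; simp only at this; omega
        obtain ⟨e, he, q1, q2, q3⟩ :=
          (hS'.2.2.2.2.2 a haS _ (fmem hf) hne2).1 (show a.1 = (condE S').1 - 1 by omega)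
        have hq3 : e.2 = min a.2 ((condE S').2 - 1) := q3 (show a.2 ≠ (condE S').2 - 1 from he2)
        exact ⟨e, Or.inl he, q1, by omega, fun _ => by omega⟩
    · have hane : a.2 ≠ (condE S').2 - 1 := by
        intro hcon
        exact deltaF_not_mem hS' (mem_deltaF.2 (Or.inr ⟨by omega, by omega⟩)) haS
      rcases lt_or_gt_of_ne hane with hlt | hgt
      · have hx : ((a.1, (condE S').2) : Z2) ∈ S' := hv' hS' (by omega) le_rfl
        have hne2 : a ≠ ((a.1, (condE S').2) : Z2) := by
          intro hcon; have := congrArg Prod.snd hcon; simp only at this; omega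
        obtain ⟨e, he, q1, q2, q3⟩ := (hS'.2.2.2.2.2 a haS _ hx hne2).1 rfl
        have hq3 : e.2 = min a.2 (condE S').2 := q3 (show a.2 ≠ (condE S').2 by omega)
        exact ⟨e, Or.inl he, q1, by omega, fun _ => by omega⟩
      · refine ⟨(a.1 + 1, (condE S').2 - 1),
          Or.inr (mem_deltaF.2 (Or.inr ⟨rfl, show (condE S').1 - 1 < a.1 + 1 by omega⟩)),
          show a.1 < a.1 + 1 by omega,
          show min a.2 b.2 ≤ (condE S').2 - 1 by omega,
          fun _ => show (condE S').2 - 1 = min a.2 b.2 by omega⟩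
  · rcases mem_deltaF.1 haD with ⟨ha1, ha2⟩ | ⟨ha1, ha2⟩
    · by_cases he2 : b.2 = (condE S').2 - 1
      · refine ⟨((condE S').1, (condE S').2 - 1),
          Or.inr (mem_deltaF.2 (Or.inr ⟨rfl, show (condE S').1 - 1 < (condE S').1 by omega⟩)),
          show a.1 < (condE S').1 by omega,
          show min a.2 b.2 ≤ (condE S').2 - 1 by omega,
          fun _ => show (condE S').2 - 1 = min a.2 b.2 by omega⟩
      · have hb2' : b.2 ≤ (condE S').2 - 1 := by
          by_contra hcon
          exact deltaF_not_mem hS' (mem_deltaF.2 (Or.inl ⟨by omega, by omega⟩)) hbS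
        have hne2 : b ≠ (((condE S').1 - 1, (condE S').2 - 1) : Z2) := by
          intro hcon; have := congrArg Prod.snd hcon; simp only at this; omega
        obtain ⟨e, he, q1, q2, q3⟩ :=
          (hS'.2.2.2.2.2 b hbS _ (fmem hf) hne2).1 (show b.1 = (condE S').1 - 1 by omega)
        have hq3 : e.2 = min b.2 ((condE S').2 - 1) := q3 (show b.2 ≠ (condE S').2 - 1 from he2)
        exact ⟨e, Or.inl he, by omega, by omega, fun _ => by omega⟩
    · have hbne : b.2 ≠ (condE S').2 - 1 := by
        intro hcon
        exact deltaF_not_mem hS' (mem_deltaF.2 (Or.inr ⟨by omega, by omega⟩)) hbS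
      rcases lt_or_gt_of_ne hbne with hlt | hgt
      · have hx : ((b.1, (condE S').2) : Z2) ∈ S' := hv' hS' (by omega) le_rfl
        have hne2 : b ≠ ((b.1, (condE S').2) : Z2) := by
          intro hcon; have := congrArg Prod.snd hcon; simp only at this; omega
        obtain ⟨e, he, q1, q2, q3⟩ := (hS'.2.2.2.2.2 b hbS _ hx hne2).1 rfl
        have hq3 : e.2 = min b.2 (condE S').2 := q3 (show b.2 ≠ (condE S').2 by omega)
        exact ⟨e, Or.inl he, by omega, by omega, fun _ => by omega⟩
      · refine ⟨(a.1 + 1, (condE S').2 - 1),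
          Or.inr (mem_deltaF.2 (Or.inr ⟨rfl, show (condE S').1 - 1 < a.1 + 1 by omega⟩)),
          show a.1 < a.1 + 1 by omega,
          show min a.2 b.2 ≤ (condE S').2 - 1 by omega,
          fun _ => show (condE S').2 - 1 = min a.2 b.2 by omega⟩
  · rcases mem_deltaF.1 haD with ⟨ha1, ha2⟩ | ⟨ha1, ha2⟩ <;>
      rcases mem_deltaF.1 hbD with ⟨hb1, hb2⟩ | ⟨hb1, hb2⟩
    · have hne2 : a.2 ≠ b.2 := fun hcon => hab (Prod.ext h1 hcon)
      refine ⟨((condE S').1, min a.2 b.2), Or.inl (hv' hS' le_rfl (by omega)),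
        show a.1 < (condE S').1 by omega, le_of_eq rfl, fun _ => rfl⟩
    · exact absurd rfl (by omega : a.1 ≠ a.1)
    · exact absurd rfl (by omega : a.1 ≠ a.1)
    · exact absurd (Prod.ext h1 (by omega)) hab

end G3Bash
section G3Bash2

variable {S' : Set Z2}

lemma g3two (hS' : IsGood S') (hl' : IsLocal S') (hne : S' ≠ N2oneone)
    (hf : condE S' - ((1 : ℤ), (1 : ℤ)) ∈ S') :
    ∀ a ∈ S' ∪ DeltaUp (condE S' - ((1 : ℤ), (1 : ℤ))),
    ∀ b ∈ S' ∪ DeltaUp (condE S' - ((1 : ℤ), (1 : ℤ))), a ≠ b → a.2 = b.2 →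
    ∃ e ∈ S' ∪ DeltaUp (condE S' - ((1 : ℤ), (1 : ℤ))),
      a.2 < e.2 ∧ min a.1 b.1 ≤ e.1 ∧ (a.1 ≠ b.1 → e.1 = min a.1 b.1) := by
  intro a ha b hb hab h2
  obtain ⟨h2c1, h2c2⟩ := two_le_cond hS' hl' hne hf
  rcases ha with haS | haD <;> rcases hb with hbS | hbD
  · obtain ⟨e, he, q1, q2, q3⟩ := (hS'.2.2.2.2.2 a haS b hbS hab).2 h2
    exact ⟨e, Or.inl he, q1, q2, q3⟩
  · rcases mem_deltaF.1 hbD with ⟨hb1, hb2⟩ | ⟨hb1, hb2⟩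
    · have hane : a.1 ≠ (condE S').1 - 1 := by
        intro hcon
        exact deltaF_not_mem hS' (mem_deltaF.2 (Or.inl ⟨by omega, by omega⟩)) haS
      rcases lt_or_gt_of_ne hane with hlt | hgt
      · have hx : (((condE S').1, a.2) : Z2) ∈ S' := hv' hS' le_rfl (by omega)
        have hne2 : a ≠ (((condE S').1, a.2) : Z2) := by
          intro hcon; have := congrArg Prod.fst hcon; simp only at this; omega
        obtain ⟨e, he, q1, q2, q3⟩ := (hS'.2.2.2.2.2 a haS _ hx hne2).2 rfl
        have hq3 : e.1 = min a.1 (condE S').1 := q3 (show a.1 ≠ (condE S').1 by omega)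
        exact ⟨e, Or.inl he, q1, by omega, fun _ => by omega⟩
      · refine ⟨((condE S').1 - 1, a.2 + 1),
          Or.inr (mem_deltaF.2 (Or.inl ⟨rfl, show (condE S').2 - 1 < a.2 + 1 by omega⟩)),
          show a.2 < a.2 + 1 by omega,
          show min a.1 b.1 ≤ (condE S').1 - 1 by omega,
          fun _ => show (condE S').1 - 1 = min a.1 b.1 by omega⟩
    · have hb1' : a.1 ≤ (condE S').1 - 1 := by
        by_contra hcon
        exact deltaF_not_mem hS' (mem_deltaF.2 (Or.inr ⟨by omega, by omega⟩)) haS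
      by_cases he1 : a.1 = (condE S').1 - 1
      · refine ⟨((condE S').1 - 1, (condE S').2),
          Or.inr (mem_deltaF.2 (Or.inl ⟨rfl, show (condE S').2 - 1 < (condE S').2 by omega⟩)),
          show a.2 < (condE S').2 by omega,
          show min a.1 b.1 ≤ (condE S').1 - 1 by omega,
          fun _ => show (condE S').1 - 1 = min a.1 b.1 by omega⟩
      · have hne2 : a ≠ (((condE S').1 - 1, (condE S').2 - 1) : Z2) := by
          intro hcon; have := congrArg Prod.fst hcon; simp only at this; omega
        obtain ⟨e, he, q1, q2, q3⟩ :=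
          (hS'.2.2.2.2.2 a haS _ (fmem hf) hne2).2 (show a.2 = (condE S').2 - 1 by omega)
        have hq3 : e.1 = min a.1 ((condE S').1 - 1) := q3 (show a.1 ≠ (condE S').1 - 1 from he1)
        exact ⟨e, Or.inl he, q1, by omega, fun _ => by omega⟩
  · rcases mem_deltaF.1 haD with ⟨ha1, ha2⟩ | ⟨ha1, ha2⟩
    · have hbne : b.1 ≠ (condE S').1 - 1 := by
        intro hcon
        exact deltaF_not_mem hS' (mem_deltaF.2 (Or.inl ⟨by omega, by omega⟩)) hbS
      rcases lt_or_gt_of_ne hbne with hlt | hgt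
      · have hx : (((condE S').1, b.2) : Z2) ∈ S' := hv' hS' le_rfl (by omega)
        have hne2 : b ≠ (((condE S').1, b.2) : Z2) := by
          intro hcon; have := congrArg Prod.fst hcon; simp only at this; omega
        obtain ⟨e, he, q1, q2, q3⟩ := (hS'.2.2.2.2.2 b hbS _ hx hne2).2 rfl
        have hq3 : e.1 = min b.1 (condE S').1 := q3 (show b.1 ≠ (condE S').1 by omega)
        exact ⟨e, Or.inl he, by omega, by omega, fun _ => by omega⟩
      · refine ⟨((condE S').1 - 1, a.2 + 1),
          Or.inr (mem_deltaF.2 (Or.inl ⟨rfl, show (condE S').2 - 1 < a.2 + 1 by omega⟩)),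
          show a.2 < a.2 + 1 by omega,
          show min a.1 b.1 ≤ (condE S').1 - 1 by omega,
          fun _ => show (condE S').1 - 1 = min a.1 b.1 by omega⟩
    · by_cases he1 : b.1 = (condE S').1 - 1
      · refine ⟨((condE S').1 - 1, (condE S').2),
          Or.inr (mem_deltaF.2 (Or.inl ⟨rfl, show (condE S').2 - 1 < (condE S').2 by omega⟩)),
          show a.2 < (condE S').2 by omega,
          show min a.1 b.1 ≤ (condE S').1 - 1 by omega,
          fun _ => show (condE S').1 - 1 = min a.1 b.1 by omega⟩
      · have hb1' : b.1 ≤ (condE S').1 - 1 := by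
          by_contra hcon
          exact deltaF_not_mem hS' (mem_deltaF.2 (Or.inr ⟨by omega, by omega⟩)) hbS
        have hne2 : b ≠ (((condE S').1 - 1, (condE S').2 - 1) : Z2) := by
          intro hcon; have := congrArg Prod.fst hcon; simp only at this; omega
        obtain ⟨e, he, q1, q2, q3⟩ :=
          (hS'.2.2.2.2.2 b hbS _ (fmem hf) hne2).2 (show b.2 = (condE S').2 - 1 by omega)
        have hq3 : e.1 = min b.1 ((condE S').1 - 1) := q3 (show b.1 ≠ (condE S').1 - 1 from he1)
        exact ⟨e, Or.inl he, by omega, by omega, fun _ => by omega⟩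
  · rcases mem_deltaF.1 haD with ⟨ha1, ha2⟩ | ⟨ha1, ha2⟩ <;>
      rcases mem_deltaF.1 hbD with ⟨hb1, hb2⟩ | ⟨hb1, hb2⟩
    · exact absurd (Prod.ext (by omega) h2) hab
    · exact absurd rfl (by omega : a.2 ≠ a.2)
    · exact absurd rfl (by omega : a.2 ≠ a.2)
    · have hne1 : a.1 ≠ b.1 := fun hcon => hab (Prod.ext hcon h2)
      refine ⟨(min a.1 b.1, (condE S').2), Or.inl (hv' hS' (by omega) le_rfl),
        show a.2 < (condE S').2 by omega, le_of_eq rfl, fun _ => rfl⟩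

end G3Bash2
section Assemble

variable {S' : Set Z2}

lemma good_union (hS' : IsGood S') (hl' : IsLocal S') (hne : S' ≠ N2oneone)
    (hf : condE S' - ((1 : ℤ), (1 : ℤ)) ∈ S') :
    IsGood (S' ∪ DeltaUp (condE S' - ((1 : ℤ), (1 : ℤ)))) := by
  obtain ⟨h2c1, h2c2⟩ := two_le_cond hS' hl' hne hf
  refine ⟨?_, Or.inl hS'.2.1, ?_, ?_, ⟨condE S', fun y hy => Or.inl (condE_valid hS' y hy)⟩,
    fun a ha b hb hab => ⟨fun h1 => g3one hS' hl' hne hf a ha b hb hab h1,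
      fun h2 => g3two hS' hl' hne hf a ha b hb hab h2⟩⟩
  · rintro p (hp | hp)
    · exact hS'.1 hp
    · rcases mem_deltaF.1 hp with ⟨hp1, hp2⟩ | ⟨hp1, hp2⟩ <;> exact ⟨by omega, by omega⟩
  · intro a ha b hb
    rcases ha with haS | haD <;> rcases hb with hbS | hbD
    · exact Or.inl (hS'.2.2.1 a haS b hbS)
    · by_cases h0 : a = 0
      · rw [h0, zero_add]; exact Or.inr hbD
      · have hp := good_pos hS' hl' haS h0
        rcases mem_deltaF.1 hbD with ⟨hb1, hb2⟩ | ⟨hb1, hb2⟩ <;>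
        · have horth := hS'.1 haS
          exact Or.inl (condE_valid hS' _ (Prod.le_def.2
            ⟨by rw [add_fst]; omega, by rw [add_snd]; omega⟩))
    · by_cases h0 : b = 0
      · rw [h0, add_zero]; exact Or.inr haD
      · have hp := good_pos hS' hl' hbS h0
        rcases mem_deltaF.1 haD with ⟨ha1, ha2⟩ | ⟨ha1, ha2⟩ <;>
        · have horth := hS'.1 hbS
          exact Or.inl (condE_valid hS' _ (Prod.le_def.2
            ⟨by rw [add_fst]; omega, by rw [add_snd]; omega⟩))
    · have ha' : (condE S').1 - 1 ≤ a.1 ∧ (condE S').2 - 1 ≤ a.2 := by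
        rcases mem_deltaF.1 haD with ⟨ha1, ha2⟩ | ⟨ha1, ha2⟩ <;> exact ⟨by omega, by omega⟩
      have hb' : (condE S').1 - 1 ≤ b.1 ∧ (condE S').2 - 1 ≤ b.2 := by
        rcases mem_deltaF.1 hbD with ⟨hb1, hb2⟩ | ⟨hb1, hb2⟩ <;> exact ⟨by omega, by omega⟩
      exact Or.inl (condE_valid hS' _ (Prod.le_def.2
        ⟨by rw [add_fst]; omega, by rw [add_snd]; omega⟩))
  · intro a ha b hb
    rcases ha with haS | haD <;> rcases hb with hbS | hbD
    · exact Or.inl (hS'.2.2.2.1 a haS b hbS)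
    · exact min_mem_SD hS' hf haS hbD
    · rw [inf_comm]; exact min_mem_SD hS' hf hbS haD
    · exact min_mem_DD hS' hf haD hbD

lemma local_union (hS' : IsGood S') (hl' : IsLocal S') (hne : S' ≠ N2oneone)
    (hf : condE S' - ((1 : ℤ), (1 : ℤ)) ∈ S') :
    IsLocal (S' ∪ DeltaUp (condE S' - ((1 : ℤ), (1 : ℤ)))) := by
  obtain ⟨h2c1, h2c2⟩ := two_le_cond hS' hl' hne hf
  rintro a (haS | haD) h0
  · exact hl' a haS h0
  · exfalso
    rcases mem_deltaF.1 haD with ⟨ha1, ha2⟩ | ⟨ha1, ha2⟩ <;> rcases h0 with h0 | h0 <;> omega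

lemma f_mem_condSet_union (hS' : IsGood S')
    (hf : condE S' - ((1 : ℤ), (1 : ℤ)) ∈ S') :
    (((condE S').1 - 1, (condE S').2 - 1) : Z2) ∈
      condSet (S' ∪ DeltaUp (condE S' - ((1 : ℤ), (1 : ℤ)))) := by
  intro y hy
  rw [Prod.le_def] at hy
  simp only at hy
  by_cases hy1 : y.1 = (condE S').1 - 1
  · by_cases hy2 : y.2 = (condE S').2 - 1
    · have : y = (((condE S').1 - 1, (condE S').2 - 1) : Z2) := Prod.ext hy1 hy2
      rw [this]; exact Or.inl (fmem hf)
    · exact Or.inr (mem_deltaF.2 (Or.inl ⟨hy1, by omega⟩))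
  · by_cases hy2 : y.2 = (condE S').2 - 1
    · exact Or.inr (mem_deltaF.2 (Or.inr ⟨hy2, by omega⟩))
    · exact Or.inl (condE_valid hS' y (Prod.le_def.2 ⟨by omega, by omega⟩))

lemma condU_le (hS' : IsGood S') (hl' : IsLocal S') (hne : S' ≠ N2oneone)
    (hf : condE S' - ((1 : ℤ), (1 : ℤ)) ∈ S') :
    condE (S' ∪ DeltaUp (condE S' - ((1 : ℤ), (1 : ℤ)))) ≤
      (((condE S').1 - 1, (condE S').2 - 1) : Z2) :=
  condE_le (good_union hS' hl' hne hf).1 (f_mem_condSet_union hS' hf)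

end Assemble
section OmHelpers

lemma iotaZ_fst (a : Z2) : (iotaZ a).1 = (a.1 : WithTop ℤ) := rfl
lemma iotaZ_snd (a : Z2) : (iotaZ a).2 = (a.2 : WithTop ℤ) := rfl
lemma omadd_fst (a b : Om) : (a + b).1 = a.1 + b.1 := rfl
lemma omadd_snd (a b : Om) : (a + b).2 = a.2 + b.2 := rfl
lemma iotaZ_zero : iotaZ (0 : Z2) = 0 := rfl

lemma iotaZ_inj {a b : Z2} (h : iotaZ a = iotaZ b) : a = b := by
  have h1 := congrArg Prod.fst h
  have h2 := congrArg Prod.snd h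
  rw [iotaZ_fst, iotaZ_fst] at h1
  rw [iotaZ_snd, iotaZ_snd] at h2
  exact Prod.ext (by exact_mod_cast h1) (by exact_mod_cast h2)

lemma finite_gam {S : Set Z2} {w : Om} (hw : w ∈ Gam S) {p q : ℤ}
    (h1 : w.1 = (p : WithTop ℤ)) (h2 : w.2 = (q : WithTop ℤ)) :
    ((p, q) : Z2) ∈ S ∧ w = iotaZ ((p, q) : Z2) := by
  rcases hw with ⟨u, hu, rfl⟩ | hinf
  · rw [iotaZ_fst] at h1
    rw [iotaZ_snd] at h2
    have e1 : u.1 = p := by exact_mod_cast h1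
    have e2 : u.2 = q := by exact_mod_cast h2
    have : u = ((p, q) : Z2) := Prod.ext e1 e2
    rw [← this]
    exact ⟨hu, rfl⟩
  · exfalso
    rcases hinf with ⟨x, hx, _⟩ | ⟨x, hx, _⟩
    · rw [hx] at h2; simp at h2
    · rw [hx] at h1; simp at h1

lemma decomp_finite {S : Set Z2} {s : Z2} {b c : Om} (hb : b ∈ Gam S) (hc : c ∈ Gam S)
    (heq : iotaZ s = b + c) :
    ∃ u v : Z2, u ∈ S ∧ v ∈ S ∧ b = iotaZ u ∧ c = iotaZ v ∧ s = u + v := by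
  have h1 : b.1 + c.1 = (s.1 : WithTop ℤ) := by rw [← omadd_fst, ← heq, iotaZ_fst]
  have h2 : b.2 + c.2 = (s.2 : WithTop ℤ) := by rw [← omadd_snd, ← heq, iotaZ_snd]
  rcases WithTop.add_eq_coe.1 h1 with ⟨p, q, hbp, hcq, hpq⟩
  rcases WithTop.add_eq_coe.1 h2 with ⟨p2, q2, hbp2, hcq2, hpq2⟩
  obtain ⟨hu, hbu⟩ := finite_gam hb hbp.symm hbp2.symm
  obtain ⟨hv, hcv⟩ := finite_gam hc hcq.symm hcq2.symm
  exact ⟨(p, p2), (q, q2), hu, hv, hbu, hcv, Prod.ext (show s.1 = p + q by omega) (show s.2 = p2 + q2 by omega)⟩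

end OmHelpers

section ISetLemmas

variable {S' : Set Z2}

lemma mem_union_S' (hS' : IsGood S') {p : Z2}
    (hp : p ∈ S' ∪ DeltaUp (condE S' - ((1 : ℤ), (1 : ℤ))))
    (h1 : p.1 ≤ (condE S').1 - 2) : p ∈ S' := by
  rcases hp with h | h
  · exact h
  · exfalso; rcases mem_deltaF.1 h with ⟨w1, w2⟩ | ⟨w1, w2⟩ <;> omega

lemma mem_union_S'2 (hS' : IsGood S') {p : Z2}
    (hp : p ∈ S' ∪ DeltaUp (condE S' - ((1 : ℤ), (1 : ℤ))))
    (h2 : p.2 ≤ (condE S').2 - 2) : p ∈ S' := by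
  rcases hp with h | h
  · exact h
  · exfalso; rcases mem_deltaF.1 h with ⟨w1, w2⟩ | ⟨w1, w2⟩ <;> omega

lemma iset_delta (hS' : IsGood S') (hl' : IsLocal S') (hne : S' ≠ N2oneone)
    (hf : condE S' - ((1 : ℤ), (1 : ℤ)) ∈ S') :
    ∀ s ∈ DeltaUp (condE S' - ((1 : ℤ), (1 : ℤ))),
      iotaZ s ∈ ISet (S' ∪ DeltaUp (condE S' - ((1 : ℤ), (1 : ℤ)))) := by
  intro s hs
  have hgood := good_union hS' hl' hne hf
  have hloc := local_union hS' hl' hne hf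
  obtain ⟨h2c1, h2c2⟩ := two_le_cond hS' hl' hne hf
  refine ⟨Or.inl ⟨s, Or.inr hs, rfl⟩, ?_, ?_⟩
  · intro hcon
    have h1 := congrArg Prod.fst hcon
    rw [iotaZ_fst] at h1
    have h1' : (s.1 : WithTop ℤ) = ((0 : ℤ) : WithTop ℤ) := h1
    have hs1 : s.1 = 0 := by exact_mod_cast h1'
    rcases mem_deltaF.1 hs with ⟨w1, w2⟩ | ⟨w1, w2⟩ <;> omega
  · intro b hb c hc heq
    obtain ⟨u, v, hu, hv, hbu, hcv, hsuv⟩ := decomp_finite hb hc heq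
    by_cases hu0 : u = 0
    · right; rw [hcv, hsuv, hu0, zero_add]
    · by_cases hv0 : v = 0
      · left; rw [hbu, hsuv, hv0, add_zero]
      · exfalso
        have hup := good_pos hgood hloc hu hu0
        have hvp := good_pos hgood hloc hv hv0
        have hsum1 : s.1 = u.1 + v.1 := by rw [hsuv, add_fst]
        have hsum2 : s.2 = u.2 + v.2 := by rw [hsuv, add_snd]
        rcases mem_deltaF.1 hs with ⟨hs1, hs2⟩ | ⟨hs1, hs2⟩
        · have huS : u ∈ S' := mem_union_S' hS' hu (by omega)
          have hvS : v ∈ S' := mem_union_S' hS' hv (by omega)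
          exact deltaF_not_mem hS' (mem_deltaF.2 (Or.inl ⟨hs1, hs2⟩))
            (by rw [hsuv]; exact hS'.2.2.1 u huS v hvS)
        · have huS : u ∈ S' := mem_union_S'2 hS' hu (by omega)
          have hvS : v ∈ S' := mem_union_S'2 hS' hv (by omega)
          exact deltaF_not_mem hS' (mem_deltaF.2 (Or.inr ⟨hs1, hs2⟩))
            (by rw [hsuv]; exact hS'.2.2.1 u huS v hvS)

end ISetLemmas
section Alpha

variable {S' : Set Z2}

lemma iset_alpha0_aux (hS' : IsGood S') (hl' : IsLocal S') (hne : S' ≠ N2oneone)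
    (hf : condE S' - ((1 : ℤ), (1 : ℤ)) ∈ S') {b c : Om}
    (hb : b ∈ Gam (S' ∪ DeltaUp (condE S' - ((1 : ℤ), (1 : ℤ)))))
    (hc : c ∈ Gam (S' ∪ DeltaUp (condE S' - ((1 : ℤ), (1 : ℤ)))))
    (heq : (((((condE S').1 - 1 : ℤ)) : WithTop ℤ), (⊤ : WithTop ℤ)) = b + c)
    (hbtop : b.2 = ⊤) :
    (((((condE S').1 - 1 : ℤ)) : WithTop ℤ), (⊤ : WithTop ℤ)) = b ∨
    (((((condE S').1 - 1 : ℤ)) : WithTop ℤ), (⊤ : WithTop ℤ)) = c := by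
  have hgood := good_union hS' hl' hne hf
  have hloc := local_union hS' hl' hne hf
  obtain ⟨h2c1, h2c2⟩ := two_le_cond hS' hl' hne hf
  have hcle := Prod.le_def.1 (condU_le hS' hl' hne hf)
  have hU2 : 1 ≤ (condE (S' ∪ DeltaUp (condE S' - ((1 : ℤ), (1 : ℤ))))).2 :=
    (condE_pos hgood hloc).2
  have h1 : b.1 + c.1 = (((condE S').1 - 1 : ℤ) : WithTop ℤ) := by rw [← omadd_fst, ← heq]
  rcases WithTop.add_eq_coe.1 h1 with ⟨p, q, hbp, hcq, hpq⟩
  have hbS : ((p, (condE (S' ∪ DeltaUp (condE S' - ((1 : ℤ), (1 : ℤ))))).2) : Z2) ∈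
      S' ∪ DeltaUp (condE S' - ((1 : ℤ), (1 : ℤ))) := by
    rcases hb with ⟨u, hu, hbu⟩ | hbinf
    · exfalso; rw [← hbu, iotaZ_snd] at hbtop; simp at hbtop
    · rcases hbinf with ⟨x, hbx, hxm⟩ | ⟨x, hbx, hxm⟩
      · have hxp : (x : WithTop ℤ) = (p : WithTop ℤ) := by rw [hbx] at hbp; exact hbp.symm
        have : x = p := by exact_mod_cast hxp
        rwa [this] at hxm
      · exfalso; rw [hbx] at hbp; simp at hbp
  have hp1 : 1 ≤ p := by
    refine (good_pos hgood hloc hbS ?_).1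
    intro hcon; have := congrArg Prod.snd hcon; simp only [Prod.snd_zero] at this; omega
  have hcol := columnFull hgood hbS le_rfl
  rcases eq_or_ne c.2 ⊤ with hctop | hcfin
  · exfalso
    have hcS : ((q, (condE (S' ∪ DeltaUp (condE S' - ((1 : ℤ), (1 : ℤ))))).2) : Z2) ∈
        S' ∪ DeltaUp (condE S' - ((1 : ℤ), (1 : ℤ))) := by
      rcases hc with ⟨u, hu, hcu⟩ | hcinf
      · exfalso; rw [← hcu, iotaZ_snd] at hctop; simp at hctop
      · rcases hcinf with ⟨x, hcx, hxm⟩ | ⟨x, hcx, hxm⟩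
        · have hxq : (x : WithTop ℤ) = (q : WithTop ℤ) := by rw [hcx] at hcq; exact hcq.symm
          have : x = q := by exact_mod_cast hxq
          rwa [this] at hxm
        · exfalso; rw [hcx] at hcq; simp at hcq
    have hq1 : 1 ≤ q := by
      refine (good_pos hgood hloc hcS ?_).1
      intro hcon; have := congrArg Prod.snd hcon; simp only [Prod.snd_zero] at this; omega
    have hpY := hcol (max (condE (S' ∪ DeltaUp (condE S' - ((1 : ℤ), (1 : ℤ))))).2
      ((condE S').2 - 1)) (le_max_left _ _)
    have hpY' := mem_union_S' hS' hpY (by show p ≤ (condE S').1 - 2; omega)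
    have hqc' := mem_union_S' hS' hcS (by show q ≤ (condE S').1 - 2; omega)
    have hsum := hS'.2.2.1 _ hpY' _ hqc'
    refine deltaF_not_mem hS' (mem_deltaF.2 (Or.inl ⟨?_, ?_⟩)) hsum
    · show p + q = (condE S').1 - 1
      omega
    · show (condE S').2 - 1 < max (condE (S' ∪ DeltaUp (condE S' - ((1 : ℤ), (1 : ℤ))))).2
        ((condE S').2 - 1) + (condE (S' ∪ DeltaUp (condE S' - ((1 : ℤ), (1 : ℤ))))).2
      omega
  · obtain ⟨v, hv⟩ := WithTop.ne_top_iff_exists.1 hcfin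
    obtain ⟨htU, hct⟩ := finite_gam hc hcq.symm hv.symm
    by_cases ht0 : ((q, v) : Z2) = 0
    · left
      rw [heq, hct, ht0, iotaZ_zero, add_zero]
    · exfalso
      have hqv := good_pos hgood hloc htU ht0
      have hq1 : 1 ≤ q := hqv.1
      have hv1 : 1 ≤ v := hqv.2
      have htS : ((q, v) : Z2) ∈ S' := mem_union_S' hS' htU (by show q ≤ (condE S').1 - 2; omega)
      have hpY := hcol (max (condE (S' ∪ DeltaUp (condE S' - ((1 : ℤ), (1 : ℤ))))).2
        ((condE S').2 - 1)) (le_max_left _ _)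
      have hpY' := mem_union_S' hS' hpY (by show p ≤ (condE S').1 - 2; omega)
      have hsum := hS'.2.2.1 _ hpY' _ htS
      refine deltaF_not_mem hS' (mem_deltaF.2 (Or.inl ⟨?_, ?_⟩)) hsum
      · show p + q = (condE S').1 - 1
        omega
      · show (condE S').2 - 1 < max (condE (S' ∪ DeltaUp (condE S' - ((1 : ℤ), (1 : ℤ))))).2
          ((condE S').2 - 1) + v
        omega

lemma iset_alpha0 (hS' : IsGood S') (hl' : IsLocal S') (hne : S' ≠ N2oneone)
    (hf : condE S' - ((1 : ℤ), (1 : ℤ)) ∈ S') :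
    (((((condE S').1 - 1 : ℤ)) : WithTop ℤ), (⊤ : WithTop ℤ)) ∈
      ISet (S' ∪ DeltaUp (condE S' - ((1 : ℤ), (1 : ℤ)))) := by
  have hgood := good_union hS' hl' hne hf
  have hcle := Prod.le_def.1 (condU_le hS' hl' hne hf)
  refine ⟨Or.inr (Or.inl ⟨(condE S').1 - 1, rfl, ?_⟩), ?_, ?_⟩
  · exact condE_valid hgood _ (Prod.le_def.2 ⟨hcle.1, le_rfl⟩)
  · intro hcon
    have := congrArg Prod.snd hcon
    simp at this
  · intro b hb c hc heq
    rcases WithTop.add_eq_top.1 (show b.2 + c.2 = ⊤ by rw [← omadd_snd, ← heq]) with h | h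
    · exact iset_alpha0_aux hS' hl' hne hf hb hc heq h
    · rcases iset_alpha0_aux hS' hl' hne hf hc hb (by rw [heq, add_comm]) h with h' | h'
      · exact Or.inr h'
      · exact Or.inl h'

end Alpha
section Alpha1

variable {S' : Set Z2}

lemma iset_alpha1_aux (hS' : IsGood S') (hl' : IsLocal S') (hne : S' ≠ N2oneone)
    (hf : condE S' - ((1 : ℤ), (1 : ℤ)) ∈ S') {b c : Om}
    (hb : b ∈ Gam (S' ∪ DeltaUp (condE S' - ((1 : ℤ), (1 : ℤ)))))
    (hc : c ∈ Gam (S' ∪ DeltaUp (condE S' - ((1 : ℤ), (1 : ℤ)))))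
    (heq : ((⊤ : WithTop ℤ), ((((condE S').2 - 1 : ℤ)) : WithTop ℤ)) = b + c)
    (hbtop : b.1 = ⊤) :
    ((⊤ : WithTop ℤ), ((((condE S').2 - 1 : ℤ)) : WithTop ℤ)) = b ∨
    ((⊤ : WithTop ℤ), ((((condE S').2 - 1 : ℤ)) : WithTop ℤ)) = c := by
  have hgood := good_union hS' hl' hne hf
  have hloc := local_union hS' hl' hne hf
  obtain ⟨h2c1, h2c2⟩ := two_le_cond hS' hl' hne hf
  have hcle := Prod.le_def.1 (condU_le hS' hl' hne hf)
  have hU1 : 1 ≤ (condE (S' ∪ DeltaUp (condE S' - ((1 : ℤ), (1 : ℤ))))).1 :=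
    (condE_pos hgood hloc).1
  have h2 : b.2 + c.2 = (((condE S').2 - 1 : ℤ) : WithTop ℤ) := by rw [← omadd_snd, ← heq]
  rcases WithTop.add_eq_coe.1 h2 with ⟨p, q, hbp, hcq, hpq⟩
  have hbS : (((condE (S' ∪ DeltaUp (condE S' - ((1 : ℤ), (1 : ℤ))))).1, p) : Z2) ∈
      S' ∪ DeltaUp (condE S' - ((1 : ℤ), (1 : ℤ))) := by
    rcases hb with ⟨u, hu, hbu⟩ | hbinf
    · exfalso; rw [← hbu, iotaZ_fst] at hbtop; simp at hbtop
    · rcases hbinf with ⟨x, hbx, hxm⟩ | ⟨x, hbx, hxm⟩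
      · exfalso; rw [hbx] at hbp; simp at hbp
      · have hxp : (x : WithTop ℤ) = (p : WithTop ℤ) := by rw [hbx] at hbp; exact hbp.symm
        have : x = p := by exact_mod_cast hxp
        rwa [this] at hxm
  have hp1 : 1 ≤ p := by
    refine (good_pos hgood hloc hbS ?_).2
    intro hcon; have := congrArg Prod.fst hcon; simp only [Prod.fst_zero] at this; omega
  have hrow := rowFull hgood hbS le_rfl
  rcases eq_or_ne c.1 ⊤ with hctop | hcfin
  · exfalso
    have hcS : (((condE (S' ∪ DeltaUp (condE S' - ((1 : ℤ), (1 : ℤ))))).1, q) : Z2) ∈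
        S' ∪ DeltaUp (condE S' - ((1 : ℤ), (1 : ℤ))) := by
      rcases hc with ⟨u, hu, hcu⟩ | hcinf
      · exfalso; rw [← hcu, iotaZ_fst] at hctop; simp at hctop
      · rcases hcinf with ⟨x, hcx, hxm⟩ | ⟨x, hcx, hxm⟩
        · exfalso; rw [hcx] at hcq; simp at hcq
        · have hxq : (x : WithTop ℤ) = (q : WithTop ℤ) := by rw [hcx] at hcq; exact hcq.symm
          have : x = q := by exact_mod_cast hxq
          rwa [this] at hxm
    have hq1 : 1 ≤ q := by
      refine (good_pos hgood hloc hcS ?_).2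
      intro hcon; have := congrArg Prod.fst hcon; simp only [Prod.fst_zero] at this; omega
    have hpX := hrow (max (condE (S' ∪ DeltaUp (condE S' - ((1 : ℤ), (1 : ℤ))))).1
      ((condE S').1 - 1)) (le_max_left _ _)
    have hpX' := mem_union_S'2 hS' hpX (by show p ≤ (condE S').2 - 2; omega)
    have hqc' := mem_union_S'2 hS' hcS (by show q ≤ (condE S').2 - 2; omega)
    have hsum := hS'.2.2.1 _ hpX' _ hqc'
    refine deltaF_not_mem hS' (mem_deltaF.2 (Or.inr ⟨?_, ?_⟩)) hsum
    · show p + q = (condE S').2 - 1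
      omega
    · show (condE S').1 - 1 < max (condE (S' ∪ DeltaUp (condE S' - ((1 : ℤ), (1 : ℤ))))).1
        ((condE S').1 - 1) + (condE (S' ∪ DeltaUp (condE S' - ((1 : ℤ), (1 : ℤ))))).1
      omega
  · obtain ⟨v, hv⟩ := WithTop.ne_top_iff_exists.1 hcfin
    obtain ⟨htU, hct⟩ := finite_gam hc hv.symm hcq.symm
    by_cases ht0 : ((v, q) : Z2) = 0
    · left
      rw [heq, hct, ht0, iotaZ_zero, add_zero]
    · exfalso
      have hqv := good_pos hgood hloc htU ht0
      have hq1 : 1 ≤ q := hqv.2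
      have hv1 : 1 ≤ v := hqv.1
      have htS : ((v, q) : Z2) ∈ S' := mem_union_S'2 hS' htU (by show q ≤ (condE S').2 - 2; omega)
      have hpX := hrow (max (condE (S' ∪ DeltaUp (condE S' - ((1 : ℤ), (1 : ℤ))))).1
        ((condE S').1 - 1)) (le_max_left _ _)
      have hpX' := mem_union_S'2 hS' hpX (by show p ≤ (condE S').2 - 2; omega)
      have hsum := hS'.2.2.1 _ hpX' _ htS
      refine deltaF_not_mem hS' (mem_deltaF.2 (Or.inr ⟨?_, ?_⟩)) hsum
      · show p + q = (condE S').2 - 1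
        omega
      · show (condE S').1 - 1 < max (condE (S' ∪ DeltaUp (condE S' - ((1 : ℤ), (1 : ℤ))))).1
          ((condE S').1 - 1) + v
        omega

lemma iset_alpha1 (hS' : IsGood S') (hl' : IsLocal S') (hne : S' ≠ N2oneone)
    (hf : condE S' - ((1 : ℤ), (1 : ℤ)) ∈ S') :
    ((⊤ : WithTop ℤ), ((((condE S').2 - 1 : ℤ)) : WithTop ℤ)) ∈
      ISet (S' ∪ DeltaUp (condE S' - ((1 : ℤ), (1 : ℤ)))) := by
  have hgood := good_union hS' hl' hne hf
  have hcle := Prod.le_def.1 (condU_le hS' hl' hne hf)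
  refine ⟨Or.inr (Or.inr ⟨(condE S').2 - 1, rfl, ?_⟩), ?_, ?_⟩
  · exact condE_valid hgood _ (Prod.le_def.2 ⟨le_rfl, hcle.2⟩)
  · intro hcon
    have := congrArg Prod.fst hcon
    simp at this
  · intro b hb c hc heq
    rcases WithTop.add_eq_top.1 (show b.1 + c.1 = ⊤ by rw [← omadd_fst, ← heq]) with h | h
    · exact iset_alpha1_aux hS' hl' hne hf hb hc heq h
    · rcases iset_alpha1_aux hS' hl' hne hf hc hb (by rw [heq, add_comm]) h with h' | h'
      · exact Or.inr h'
      · exact Or.inl h'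

end Alpha1
section Reverse

def trackAlpha (x y : ℤ) : ℕ → Om :=
  fun i => if i = 0 then ((x : WithTop ℤ), (⊤ : WithTop ℤ))
           else ((⊤ : WithTop ℤ), (y : WithTop ℤ))

lemma trackAlpha_zero (x y : ℤ) : trackAlpha x y 0 = ((x : WithTop ℤ), (⊤ : WithTop ℤ)) := rfl
lemma trackAlpha_one (x y : ℤ) : trackAlpha x y 1 = ((⊤ : WithTop ℤ), (y : WithTop ℤ)) := rfl

lemma trackAlpha_inf (x y : ℤ) :
    trackAlpha x y 0 ⊓ trackAlpha x y 1 = (((x : WithTop ℤ), (y : WithTop ℤ)) : Om) :=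
  Prod.ext (inf_eq_left.2 le_top) (inf_eq_right.2 le_top)

lemma upD_pair {x y : ℤ} {b : Z2} :
    b ∈ upD (((x : WithTop ℤ), (y : WithTop ℤ)) : Om) ↔
      (b.1 = x ∧ y < b.2) ∨ (b.2 = y ∧ x < b.1) := by
  constructor
  · rintro (⟨e1, e2⟩ | ⟨e1, e2⟩)
    · have e1' : (b.1 : WithTop ℤ) = (x : WithTop ℤ) := e1
      have e2' : (y : WithTop ℤ) < (b.2 : WithTop ℤ) := e2
      exact Or.inl ⟨by exact_mod_cast e1', by exact_mod_cast e2'⟩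
    · have e1' : (b.2 : WithTop ℤ) = (y : WithTop ℤ) := e1
      have e2' : (x : WithTop ℤ) < (b.1 : WithTop ℤ) := e2
      exact Or.inr ⟨by exact_mod_cast e1', by exact_mod_cast e2'⟩
  · rintro (⟨e1, e2⟩ | ⟨e1, e2⟩)
    · exact Or.inl ⟨show (b.1 : WithTop ℤ) = (x : WithTop ℤ) by exact_mod_cast e1,
        show (y : WithTop ℤ) < (b.2 : WithTop ℤ) by exact_mod_cast e2⟩
    · exact Or.inr ⟨show (b.2 : WithTop ℤ) = (y : WithTop ℤ) by exact_mod_cast e1,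
        show (x : WithTop ℤ) < (b.1 : WithTop ℤ) by exact_mod_cast e2⟩

variable {S' : Set Z2}

lemma trackSet_eq (hS' : IsGood S') :
    trackSet (S' ∪ DeltaUp (condE S' - ((1 : ℤ), (1 : ℤ)))) 2
      (trackAlpha ((condE S').1 - 1) ((condE S').2 - 1)) =
    DeltaUp (condE S' - ((1 : ℤ), (1 : ℤ))) := by
  ext z
  unfold trackSet
  simp only [Set.mem_union, Set.mem_inter_iff, Set.mem_iUnion, Finset.mem_range, exists_prop]
  constructor
  · rintro ((((hz | hz) | hz) | hz) | hz)
    · exfalso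
      have := congrArg Prod.snd (show iotaZ z = trackAlpha _ _ 0 from hz)
      rw [trackAlpha_zero, iotaZ_snd] at this
      simp at this
    · exfalso
      have := hz.2.1
      rw [trackAlpha_zero] at this
      simp at this
    · obtain ⟨i, hi, hzU, hzup⟩ := hz
      have hi0 : i = 0 := by omega
      subst hi0
      rw [show (0 : ℕ) + 1 = 1 from rfl, trackAlpha_inf] at hzup
      rcases upD_pair.1 hzup with ⟨e1, e2⟩ | ⟨e1, e2⟩
      · exact mem_deltaF.2 (Or.inl ⟨e1, e2⟩)
      · exact mem_deltaF.2 (Or.inr ⟨e1, e2⟩)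
    · exfalso
      have := hz.2.1
      rw [show (2 : ℕ) - 1 = 1 from rfl, trackAlpha_one] at this
      simp at this
    · exfalso
      have := congrArg Prod.fst
        (show iotaZ z = trackAlpha _ _ (2 - 1) from hz)
      rw [show (2 : ℕ) - 1 = 1 from rfl, trackAlpha_one, iotaZ_fst] at this
      simp at this
  · intro hz
    refine Or.inl (Or.inl (Or.inr ⟨0, by omega, Or.inr hz, ?_⟩))
    rw [show (0 : ℕ) + 1 = 1 from rfl, trackAlpha_inf]
    rcases mem_deltaF.1 hz with ⟨e1, e2⟩ | ⟨e1, e2⟩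
    · exact upD_pair.2 (Or.inl ⟨e1, e2⟩)
    · exact upD_pair.2 (Or.inr ⟨e1, e2⟩)

lemma special_parent_union (hS' : IsGood S') (hl' : IsLocal S') (hne : S' ≠ N2oneone)
    (hf : condE S' - ((1 : ℤ), (1 : ℤ)) ∈ S') :
    SpecialParent (S' ∪ DeltaUp (condE S' - ((1 : ℤ), (1 : ℤ)))) S' := by
  have hgood := good_union hS' hl' hne hf
  have hloc := local_union hS' hl' hne hf
  obtain ⟨h2c1, h2c2⟩ := two_le_cond hS' hl' hne hf
  have hcle := Prod.le_def.1 (condU_le hS' hl' hne hf)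
  have hcle1 : (condE (S' ∪ DeltaUp (condE S' - ((1 : ℤ), (1 : ℤ))))).1 ≤ (condE S').1 - 1 :=
    hcle.1
  have hcle2 : (condE (S' ∪ DeltaUp (condE S' - ((1 : ℤ), (1 : ℤ))))).2 ≤ (condE S').2 - 1 :=
    hcle.2
  refine ⟨hgood, hloc, DeltaUp (condE S' - ((1 : ℤ), (1 : ℤ))),
    ⟨⟨2, trackAlpha ((condE S').1 - 1) ((condE S').2 - 1), ?_, (trackSet_eq hS').symm⟩, ?_⟩, ?_⟩
  · refine ⟨one_le_two, ?_, ?_, ?_, ?_, ?_⟩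
    · intro i hi
      interval_cases i
      · rw [trackAlpha_zero]
        refine ⟨iset_alpha0 hS' hl' hne hf, Or.inr (Or.inl ⟨(condE S').1 - 1, rfl, ?_⟩)⟩
        exact condE_valid hgood _ (Prod.le_def.2 ⟨hcle.1, le_rfl⟩)
      · rw [trackAlpha_one]
        refine ⟨iset_alpha1 hS' hl' hne hf, Or.inr (Or.inr ⟨(condE S').2 - 1, rfl, ?_⟩)⟩
        exact condE_valid hgood _ (Prod.le_def.2 ⟨le_rfl, hcle.2⟩)
    · intro i j hij hj
      have hi0 : i = 0 := by omega
      have hj1 : j = 1 := by omega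
      subst hi0; subst hj1
      rw [trackAlpha_zero, trackAlpha_one]
      exact WithTop.coe_lt_top _
    · intro s hs hmem
      exfalso
      have := hmem.1
      rw [trackAlpha_zero] at this
      simp at this
    · intro s hs hmem
      exfalso
      have := hmem.1
      rw [show (2 : ℕ) - 1 = 1 from rfl, trackAlpha_one] at this
      simp at this
    · intro i hi
      have hi0 : i = 0 := by omega
      subst hi0
      refine ⟨?_, ?_, ?_⟩
      · intro hcon
        have := hcon.2
        rw [trackAlpha_zero, trackAlpha_one] at this  
        simp at this
      · intro hcon
        have := hcon.1
        rw [trackAlpha_zero, trackAlpha_one] at this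
        simp at this
      · intro s hsU hsup
        rw [show (0 : ℕ) + 1 = 1 from rfl, trackAlpha_inf] at hsup
        refine iset_delta hS' hl' hne hf s ?_
        rcases upD_pair.1 hsup with ⟨e1, e2⟩ | ⟨e1, e2⟩
        · exact mem_deltaF.2 (Or.inl ⟨e1, e2⟩)
        · exact mem_deltaF.2 (Or.inr ⟨e1, e2⟩)
  · refine ⟨((condE S').1 - 1, (condE S').2), mem_deltaF.2 (Or.inl ⟨rfl, by omega⟩),
      Or.inr (mem_deltaF.2 (Or.inl ⟨rfl, by omega⟩)), Prod.le_def.2 ⟨?_, ?_⟩⟩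
    · show (condE (S' ∪ DeltaUp (condE S' - ((1 : ℤ), (1 : ℤ))))).1 ≤ (condE S').1 - 1
      omega
    · show (condE (S' ∪ DeltaUp (condE S' - ((1 : ℤ), (1 : ℤ))))).2 ≤ (condE S').2
      omega
  · ext z
    constructor
    · intro hz
      exact ⟨Or.inl hz, fun hd => deltaF_not_mem hS' hd hz⟩
    · rintro ⟨hz | hz, hnd⟩
      · exact hz
      · exact absurd hz hnd

end Reverse
section TrackLemmas

variable {S : Set Z2} {n : ℕ} {α : ℕ → Om}

lemma track_subset (hTD : TrackData S n α) : trackSet S n α ⊆ S := by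
  have hend : ∀ m, m < n → ∀ z : Z2, iotaZ z = α m → z ∈ S := by
    intro m hm z hz
    have him := (hTD.2.1 m hm).2
    rcases him with ⟨a, ha, haeq⟩ | hinf
    · have : z = a := iotaZ_inj (by rw [hz, ← haeq])
      rw [this]; exact ha.1
    · exfalso
      rcases hinf with ⟨x, hx, _⟩ | ⟨x, hx, _⟩
      · have := congrArg Prod.snd (hz.trans hx)
        rw [iotaZ_snd] at this; simp at this
      · have := congrArg Prod.fst (hz.trans hx)
        rw [iotaZ_fst] at this; simp at this
  rintro z ((((hz | hz) | hz) | hz) | hz)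
  · exact hend 0 (by have := hTD.1; omega) z hz
  · exact hz.1
  · simp only [Set.mem_iUnion, Finset.mem_range, exists_prop] at hz
    obtain ⟨i, _, hzS, _⟩ := hz
    exact hzS
  · exact hz.1
  · exact hend (n-1) (by have := hTD.1; omega) z hz

lemma track_mono1 (hTD : TrackData S n α) :
    ∀ i j, i ≤ j → j < n → (α i).1 ≤ (α j).1 := by
  intro i j hij hj
  rcases eq_or_lt_of_le hij with rfl | h
  · exact le_rfl
  · exact le_of_lt (hTD.2.2.1 i j h hj)

lemma track_anti2 (hTD : TrackData S n α) :
    ∀ i, i + 1 < n → (α (i+1)).2 < (α i).2 := by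
  intro i hi
  have hp := hTD.2.2.2.2.2 i hi
  have h1 : (α i).1 ≤ (α (i+1)).1 := le_of_lt (hTD.2.2.1 i (i+1) (by omega) hi)
  by_contra hcon
  exact hp.1 (Prod.le_def.2 ⟨h1, le_of_not_gt hcon⟩)

lemma track_anti2' (hTD : TrackData S n α) :
    ∀ i j, i ≤ j → j < n → (α j).2 ≤ (α i).2 := by
  intro i j hij hj
  induction j with
  | zero => have : i = 0 := by omega
            rw [this]
  | succ k ih =>
    rcases Nat.lt_or_ge i (k+1) with h | h
    · have h1 : (α k).2 ≤ (α i).2 := ih (by omega) (by omega)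
      have h2 : (α (k+1)).2 < (α k).2 := track_anti2 hTD k hj
      exact le_trans (le_of_lt h2) h1
    · have : i = k + 1 := by omega
      rw [this]

lemma track_gamma (hTD : TrackData S n α) {i : ℕ} (hi : i + 1 < n) :
    α i ⊓ α (i+1) = (((α i).1, (α (i+1)).2) : Om) := by
  refine Prod.ext ?_ ?_
  · exact inf_eq_left.2 (le_of_lt (hTD.2.2.1 i (i+1) (by omega) hi))
  · exact inf_eq_right.2 (le_of_lt (track_anti2 hTD i hi))

lemma track_mem_cases (hTD : TrackData S n α) {z : Z2} (hz : z ∈ trackSet S n α) :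
    iotaZ z = α 0 ∨ iotaZ z = α (n-1) ∨
    (z ∈ S ∧ (z.2 : WithTop ℤ) = (α 0).2 ∧ (z.1 : WithTop ℤ) < (α 0).1) ∨
    (z ∈ S ∧ (z.1 : WithTop ℤ) = (α (n-1)).1 ∧ (z.2 : WithTop ℤ) < (α (n-1)).2) ∨
    (∃ i, i + 1 < n ∧ z ∈ S ∧
      (((z.1 : WithTop ℤ) = (α i).1 ∧ (α (i+1)).2 < (z.2 : WithTop ℤ)) ∨
       ((z.2 : WithTop ℤ) = (α (i+1)).2 ∧ (α i).1 < (z.1 : WithTop ℤ)))) := by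
  rcases hz with (((hz | hz) | hz) | hz) | hz
  · exact Or.inl hz
  · exact Or.inr (Or.inr (Or.inl ⟨hz.1, hz.2.1, hz.2.2⟩))
  · simp only [Set.mem_iUnion, Finset.mem_range, exists_prop] at hz
    obtain ⟨i, hi, hzS, hzup⟩ := hz
    have hi' : i + 1 < n := by have := hTD.1; omega
    rw [track_gamma hTD hi'] at hzup
    refine Or.inr (Or.inr (Or.inr (Or.inr ⟨i, hi', hzS, ?_⟩)))
    rcases hzup with ⟨e1, e2⟩ | ⟨e1, e2⟩
    · exact Or.inl ⟨e1, e2⟩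
    · exact Or.inr ⟨e1, e2⟩
  · exact Or.inr (Or.inr (Or.inr (Or.inl ⟨hz.1, hz.2.1, hz.2.2⟩)))
  · exact Or.inr (Or.inl hz)

lemma ia_finite_case {w : Om} (hw : w ∈ IA S) {V W : ℤ}
    (h1 : w.1 = (V : WithTop ℤ)) (h2 : w.2 = (W : WithTop ℤ)) : ((V, W) : Z2) ∈ Af S := by
  rcases hw.2 with ⟨a, ha, haeq⟩ | hinf
  · have e1 : a.1 = V := by
      have := congrArg Prod.fst haeq; rw [iotaZ_fst, h1] at this; exact_mod_cast this
    have e2 : a.2 = W := by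
      have := congrArg Prod.snd haeq; rw [iotaZ_snd, h2] at this; exact_mod_cast this
    rwa [show ((V, W) : Z2) = a from Prod.ext e1.symm e2.symm]
  · exfalso
    rcases hinf with ⟨x, hx, _⟩ | ⟨x, hx, _⟩
    · rw [hx] at h2; simp at h2
    · rw [hx] at h1; simp at h1

lemma af_kill {V W : ℤ} (haf : ((V, W) : Z2) ∈ Af S) {p : Z2} (hp : p ∈ S)
    (hd : (p.1 = V ∧ W < p.2) ∨ (p.2 = W ∧ V < p.1)) : False := by
  have : p ∈ S ∩ DeltaUp ((V, W) : Z2) := ⟨hp, by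
    rcases hd with ⟨e1, e2⟩ | ⟨e1, e2⟩
    · exact Or.inl ⟨e1, e2⟩
    · exact Or.inr ⟨e1, e2⟩⟩
  rw [haf.2] at this
  exact this

lemma ia_fst_top {w : Om} (hw : w ∈ IA S) (h : w.1 = ⊤) :
    ∃ b : ℤ, w = ((⊤ : WithTop ℤ), (b : WithTop ℤ)) ∧ (((condE S).1, b) : Z2) ∈ S := by
  rcases hw.2 with ⟨a, _, haeq⟩ | hinf
  · exfalso; rw [← haeq, iotaZ_fst] at h; simp at h
  · rcases hinf with ⟨x, hx, _⟩ | ⟨x, hx, hxm⟩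
    · exfalso; rw [hx] at h; simp at h
    · exact ⟨x, hx, hxm⟩

lemma ia_snd_top {w : Om} (hw : w ∈ IA S) (h : w.2 = ⊤) :
    ∃ a : ℤ, w = ((a : WithTop ℤ), (⊤ : WithTop ℤ)) ∧ ((a, (condE S).2) : Z2) ∈ S := by
  rcases hw.2 with ⟨a, _, haeq⟩ | hinf
  · exfalso; rw [← haeq, iotaZ_snd] at h; simp at h
  · rcases hinf with ⟨x, hx, hxm⟩ | ⟨x, hx, _⟩
    · exact ⟨x, hx, hxm⟩
    · exfalso; rw [hx] at h; simp at h

end TrackLemmas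
section PathRow

lemma path_row {S' : Set Z2} (hS' : IsGood S') (hl' : IsLocal S') (hne : S' ≠ N2oneone)
    (hf : condE S' - ((1 : ℤ), (1 : ℤ)) ∈ S')
    {S : Set Z2} (hgS : IsGood S)
    {n : ℕ} {α : ℕ → Om} (hTD : TrackData S n α)
    (hS'd : S' = S \ trackSet S n α)
    (hd1 : (condE S).1 ≤ (condE S').1)
    (hd2 : (condE S).2 ≤ (condE S').2 - 1) :
    S = S' ∪ DeltaUp (condE S' - ((1 : ℤ), (1 : ℤ))) := by
  obtain ⟨h2c1, h2c2⟩ := two_le_cond hS' hl' hne hf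
  have hSS' : S' ⊆ S := by rw [hS'd]; exact Set.diff_subset
  have hdisj : ∀ z ∈ trackSet S n α, z ∉ S' := by
    intro z hz hz'
    rw [hS'd] at hz'
    exact hz'.2 hz
  have hsplit : ∀ z ∈ S, z ∉ trackSet S n α → z ∈ S' := by
    intro z hz hnT; rw [hS'd]; exact ⟨hz, hnT⟩
  have htail : ∀ x, (condE S').1 ≤ x → ((x, (condE S').2 - 1) : Z2) ∈ trackSet S n α := by
    intro x hx
    have hxS : ((x, (condE S').2 - 1) : Z2) ∈ S :=
      condE_valid hgS _ (Prod.le_def.2 ⟨show (condE S).1 ≤ x by omega,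
        show (condE S).2 ≤ (condE S').2 - 1 by omega⟩)
    by_contra hnT
    exact deltaF_not_mem hS'
      (mem_deltaF.2 (Or.inr ⟨rfl, show (condE S').1 - 1 < x by omega⟩))
      (hsplit _ hxS hnT)
  have hkill : ∀ V : ℤ, ((V, (condE S').2 - 1) : Z2) ∈ Af S → False := by
    intro V haf
    exact af_kill haf
      (condE_valid hgS (max ((condE S').1) (V+1), (condE S').2 - 1)
        (Prod.le_def.2 ⟨show (condE S).1 ≤ max ((condE S').1) (V+1) by omega,
          show (condE S).2 ≤ (condE S').2 - 1 by omega⟩))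
      (Or.inr ⟨rfl, show V < max ((condE S').1) (V+1) by omega⟩)
  rcases Nat.lt_or_ge n 2 with hn1 | hn2
  · exfalso
    have hn : n = 1 := by have := hTD.1; omega
    subst hn
    have hIA := hTD.2.1 0 (by omega)
    by_cases h1t : (α 0).1 = ⊤
    · obtain ⟨bb, hw, _⟩ := ia_fst_top hIA h1t
      have hbbval : bb = (condE S').2 - 1 := by
        rcases track_mem_cases hTD (htail (condE S').1 le_rfl) with hc|hc|hc|hc|hc
        · have h0 := congrArg Prod.snd hc
          rw [iotaZ_snd, hw] at h0
          have h0' : (((condE S').2 - 1 : ℤ) : WithTop ℤ) = (bb : WithTop ℤ) := h0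
          exact_mod_cast h0'.symm
        · have h0 := congrArg Prod.snd hc
          rw [iotaZ_snd, hw] at h0
          have h0' : (((condE S').2 - 1 : ℤ) : WithTop ℤ) = (bb : WithTop ℤ) := h0
          exact_mod_cast h0'.symm
        · have h0 := hc.2.1
          rw [hw] at h0
          have h0' : (((condE S').2 - 1 : ℤ) : WithTop ℤ) = (bb : WithTop ℤ) := h0
          exact_mod_cast h0'.symm
        · exfalso
          have h0 : (((condE S').1 : ℤ) : WithTop ℤ) = (α 0).1 := hc.2.1
          rw [hw] at h0
          simp at h0
        · exfalso; obtain ⟨i, hi, _⟩ := hc; omega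
      have hfT : (((condE S').1 - 1, (condE S').2 - 1) : Z2) ∈ trackSet S 1 α := by
        refine Or.inl (Or.inl (Or.inl (Or.inr ⟨hSS' (fmem hf), ?_, ?_⟩)))
        · rw [hw, hbbval]
        · rw [hw]; exact WithTop.coe_lt_top _
      exact hdisj _ hfT (fmem hf)
    · obtain ⟨A, hA⟩ := WithTop.ne_top_iff_exists.1 h1t
      by_cases h2t : (α 0).2 = ⊤
      · rcases track_mem_cases hTD
          (htail (max (condE S').1 (A+1)) (le_max_left _ _)) with hc|hc|hc|hc|hc
        · have := congrArg Prod.snd hc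
          rw [iotaZ_snd, h2t] at this; simp at this
        · have h0 : ((((condE S').2 - 1 : ℤ)) : WithTop ℤ) = (α 0).2 := congrArg Prod.snd hc
          rw [h2t] at h0; simp at h0
        · have := hc.2.1
          rw [h2t] at this; simp at this
        · have h0 : ((max (condE S').1 (A+1) : ℤ) : WithTop ℤ) = (α 0).1 := hc.2.1
          rw [← hA] at h0
          have : max (condE S').1 (A+1) = A := by exact_mod_cast h0
          omega
        · obtain ⟨i, hi, _⟩ := hc; omega
      · obtain ⟨W, hW⟩ := WithTop.ne_top_iff_exists.1 h2t
        rcases track_mem_cases hTD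
          (htail (max (condE S').1 (A+1)) (le_max_left _ _)) with hc|hc|hc|hc|hc
        · have := congrArg Prod.fst hc
          rw [iotaZ_fst, ← hA] at this
          have : max (condE S').1 (A+1) = A := by exact_mod_cast this
          omega
        · have h0 : ((max (condE S').1 (A+1) : ℤ) : WithTop ℤ) = (α 0).1 := congrArg Prod.fst hc
          rw [← hA] at h0
          have : max (condE S').1 (A+1) = A := by exact_mod_cast h0
          omega
        · have := hc.2.2
          rw [← hA] at this
          have : max (condE S').1 (A+1) < A := by exact_mod_cast this
          omega
        · have h0 : ((max (condE S').1 (A+1) : ℤ) : WithTop ℤ) = (α 0).1 := hc.2.1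
          rw [← hA] at h0
          have : max (condE S').1 (A+1) = A := by exact_mod_cast h0
          omega
        · obtain ⟨i, hi, _⟩ := hc; omega
  -- now n ≥ 2
  have hR1 : (α (n-1)).1 = ⊤ := by
    by_contra hcon
    obtain ⟨M, hM⟩ := WithTop.ne_top_iff_exists.1 hcon
    rcases track_mem_cases hTD
      (htail (max (condE S').1 (M+1)) (le_max_left _ _)) with hc|hc|hc|hc|hc
    · have h0 := congrArg Prod.fst hc
      rw [iotaZ_fst] at h0
      have hle : (α 0).1 ≤ (α (n-1)).1 := track_mono1 hTD 0 (n-1) (by omega) (by omega)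
      rw [← h0, ← hM] at hle
      have : max (condE S').1 (M+1) ≤ M := by exact_mod_cast hle
      omega
    · have h0 := congrArg Prod.fst hc
      rw [iotaZ_fst, ← hM] at h0
      have : max (condE S').1 (M+1) = M := by exact_mod_cast h0
      omega
    · have h0 := hc.2.2
      have hle : (α 0).1 ≤ (α (n-1)).1 := track_mono1 hTD 0 (n-1) (by omega) (by omega)
      have := lt_of_lt_of_le h0 hle
      rw [← hM] at this
      have : max (condE S').1 (M+1) < M := by exact_mod_cast this
      omega
    · have h0 := hc.2.1
      rw [← hM] at h0
      have : max (condE S').1 (M+1) = M := by exact_mod_cast h0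
      omega
    · obtain ⟨i, hi, hzS, hdis⟩ := hc
      rcases hdis with ⟨e1, e2⟩ | ⟨e1, e2⟩
      · have hle : (α i).1 ≤ (α (n-1)).1 := track_mono1 hTD i (n-1) (by omega) (by omega)
        rw [← e1, ← hM] at hle
        have : max (condE S').1 (M+1) ≤ M := by exact_mod_cast hle
        omega
      · have hia := hTD.2.1 (i+1) (by omega)
        by_cases htop : (α (i+1)).1 = ⊤
        · have hle : (α (i+1)).1 ≤ (α (n-1)).1 := track_mono1 hTD (i+1) (n-1) (by omega) (by omega)
          rw [htop, ← hM] at hle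
          simp at hle
        · obtain ⟨V, hV⟩ := WithTop.ne_top_iff_exists.1 htop
          exact hkill V (ia_finite_case hia hV.symm e1.symm)
  have h2fin : (α (n-1)).2 ≠ ⊤ := by
    have h := track_anti2 hTD (n-2) (by omega)
    rw [show n - 2 + 1 = n - 1 from by omega] at h
    exact ne_top_of_lt h
  obtain ⟨bb, hbb⟩ := WithTop.ne_top_iff_exists.1 h2fin
  have hKfin : (α (n-2)).1 ≠ ⊤ := ne_top_of_lt (hTD.2.2.1 (n-2) (n-1) (by omega) (by omega))
  obtain ⟨K, hK⟩ := WithTop.ne_top_iff_exists.1 hKfin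
  have hbbr : bb = (condE S').2 - 1 := by
    rcases track_mem_cases hTD
      (htail (max (condE S').1 (K+1)) (le_max_left _ _)) with hc|hc|hc|hc|hc
    · exfalso
      have h0 := congrArg Prod.fst hc
      rw [iotaZ_fst] at h0
      have hle : (α 0).1 ≤ (α (n-2)).1 := track_mono1 hTD 0 (n-2) (by omega) (by omega)
      rw [← h0, ← hK] at hle
      have : max (condE S').1 (K+1) ≤ K := by exact_mod_cast hle
      omega
    · exfalso
      have h0 := congrArg Prod.fst hc
      rw [iotaZ_fst, hR1] at h0
      simp at h0
    · exfalso
      have h0 := hc.2.2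
      have hle : (α 0).1 ≤ (α (n-2)).1 := track_mono1 hTD 0 (n-2) (by omega) (by omega)
      have := lt_of_lt_of_le h0 hle
      rw [← hK] at this
      have : max (condE S').1 (K+1) < K := by exact_mod_cast this
      omega
    · exfalso
      have h0 := hc.2.1
      rw [hR1] at h0
      simp at h0
    · obtain ⟨i, hi, hzS, hdis⟩ := hc
      rcases hdis with ⟨e1, e2⟩ | ⟨e1, e2⟩
      · exfalso
        have hle : (α i).1 ≤ (α (n-2)).1 := track_mono1 hTD i (n-2) (by omega) (by omega)
        rw [← e1, ← hK] at hle
        have : max (condE S').1 (K+1) ≤ K := by exact_mod_cast hle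
        omega
      · by_cases hieq : i + 1 = n - 1
        · rw [hieq, ← hbb] at e1
          exact_mod_cast e1.symm
        · exfalso
          have hle : (α (i+1)).1 ≤ (α (n-2)).1 := track_mono1 hTD (i+1) (n-2) (by omega) (by omega)
          have hnt : (α (i+1)).1 ≠ ⊤ := by
            rw [← hK] at hle
            exact ne_top_of_le_ne_top (WithTop.coe_ne_top) hle
          obtain ⟨V, hV⟩ := WithTop.ne_top_iff_exists.1 hnt
          exact hkill V (ia_finite_case (hTD.2.1 (i+1) (by omega)) hV.symm e1.symm)
  have h22 : (α (n-2)).2 = ⊤ := by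
    by_contra hcon
    obtain ⟨B, hB⟩ := WithTop.ne_top_iff_exists.1 hcon
    have haf := ia_finite_case (hTD.2.1 (n-2) (by omega)) hK.symm hB.symm
    have hBge : (condE S').2 ≤ B := by
      have h := track_anti2 hTD (n-2) (by omega)
      rw [show n - 2 + 1 = n - 1 from by omega, ← hbb, ← hB] at h
      have : bb < B := by exact_mod_cast h
      omega
    exact af_kill haf
      (condE_valid hgS (max ((condE S').1) (K+1), B)
        (Prod.le_def.2 ⟨show (condE S).1 ≤ max ((condE S').1) (K+1) by omega,
          show (condE S).2 ≤ B by omega⟩))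
      (Or.inr ⟨rfl, show K < max ((condE S').1) (K+1) by omega⟩)
  have hn2' : n = 2 := by
    by_contra hn3
    have h := track_anti2 hTD (n-3) (by omega)
    rw [show n - 3 + 1 = n - 2 from by omega, h22] at h
    exact not_top_lt h
  subst hn2'
  have hR1' : (α 1).1 = ⊤ := hR1
  have hbb' : (bb : WithTop ℤ) = (α 1).2 := hbb
  have hK' : (K : WithTop ℤ) = (α 0).1 := hK
  have h22' : (α 0).2 = ⊤ := h22
  have hγ : α 0 ⊓ α 1 = (((K : WithTop ℤ), (((condE S').2 - 1 : ℤ) : WithTop ℤ)) : Om) := by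
    rw [track_gamma hTD (show 0 + 1 < 2 by omega)]
    refine Prod.ext ?_ ?_
    · show (α 0).1 = _
      rw [← hK']
    · show (α 1).2 = _
      rw [← hbb', hbbr]
  have hTiff : ∀ z : Z2, z ∈ trackSet S 2 α ↔ z ∈ S ∧
      ((z.1 = K ∧ (condE S').2 - 1 < z.2) ∨ (z.2 = (condE S').2 - 1 ∧ K < z.1)) := by
    intro z
    constructor
    · intro hz
      rcases track_mem_cases hTD hz with hc|hc|hc|hc|hc
      · exfalso
        have h0 : (z.2 : WithTop ℤ) = (α 0).2 := congrArg Prod.snd hc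
        rw [h22'] at h0
        simp at h0
      · exfalso
        have h0 : (z.1 : WithTop ℤ) = (α 1).1 := congrArg Prod.fst hc
        rw [hR1'] at h0
        simp at h0
      · exfalso
        have h0 : (z.2 : WithTop ℤ) = (α 0).2 := hc.2.1
        rw [h22'] at h0
        simp at h0
      · exfalso
        have h0 : (z.1 : WithTop ℤ) = (α 1).1 := hc.2.1
        rw [hR1'] at h0
        simp at h0
      · obtain ⟨i, hi, hzS, hdis⟩ := hc
        have hi0 : i = 0 := by omega
        subst hi0
        refine ⟨hzS, ?_⟩
        rcases hdis with ⟨e1, e2⟩ | ⟨e1, e2⟩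
        · left
          constructor
          · rw [← hK'] at e1; exact_mod_cast e1
          · rw [← hbb', hbbr] at e2; exact_mod_cast e2
        · right
          constructor
          · rw [← hbb', hbbr] at e1; exact_mod_cast e1
          · rw [← hK'] at e2; exact_mod_cast e2
    · rintro ⟨hzS, hd⟩
      refine Or.inl (Or.inl (Or.inr ?_))
      simp only [Set.mem_iUnion, Finset.mem_range, exists_prop]
      refine ⟨0, by omega, hzS, ?_⟩
      rw [show (0:ℕ) + 1 = 1 from rfl, hγ]
      exact upD_pair.2 hd
  have hsinf := ia_snd_top (hTD.2.1 0 (by omega)) h22'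
  obtain ⟨a, hav, ham⟩ := hsinf
  have ha' : a = K := by
    have h0 : (α 0).1 = (a : WithTop ℤ) := congrArg Prod.fst hav
    rw [← hK'] at h0
    exact_mod_cast h0.symm
  rw [ha'] at ham
  have hcol := columnFull hgS ham le_rfl
  have hKlt : K < (condE S').1 := by
    have h := ((hTiff _).1 (htail (condE S').1 le_rfl)).2
    rcases h with ⟨e1, e2⟩ | ⟨e1, e2⟩
    · have e2' : (condE S').2 - 1 < (condE S').2 - 1 := e2
      omega
    · have e2' : K < (condE S').1 := e2
      exact e2'
  have hKeq : K = (condE S').1 - 1 := by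
    by_contra hne'
    have hKr : ((K, (condE S').2 - 1) : Z2) ∈ S := hcol _ (by omega)
    have hKrS' : ((K, (condE S').2 - 1) : Z2) ∈ S' := by
      refine hsplit _ hKr (fun hT => ?_)
      rcases ((hTiff _).1 hT).2 with ⟨e1, e2⟩ | ⟨e1, e2⟩
      · have e2' : (condE S').2 - 1 < (condE S').2 - 1 := e2
        omega
      · have e2' : K < K := e2
        omega
    have hneq : ((K, (condE S').2 - 1) : Z2) ≠ (((condE S').1 - 1, (condE S').2 - 1) : Z2) := by
      intro hcon; have := congrArg Prod.fst hcon; simp only at this; omega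
    obtain ⟨e, he, q1, q2, q3⟩ := (hS'.2.2.2.2.2 _ hKrS' _ (fmem hf) hneq).2 rfl
    have hq3 : e.1 = min K ((condE S').1 - 1) := q3 (show K ≠ (condE S').1 - 1 from hne')
    have heT : e ∈ trackSet S 2 α := by
      refine (hTiff e).2 ⟨hSS' he, Or.inl ⟨by omega, ?_⟩⟩
      have q1' : (condE S').2 - 1 < e.2 := q1
      omega
    exact hdisj e heT he
  have hDS : ∀ p ∈ DeltaUp (condE S' - ((1 : ℤ), (1 : ℤ))), p ∈ S := by
    intro p hp
    rcases mem_deltaF.1 hp with ⟨e1, e2⟩ | ⟨e1, e2⟩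
    · have hm := hcol p.2 (by omega)
      rwa [show ((K, p.2) : Z2) = p from Prod.ext (by omega) rfl] at hm
    · exact condE_valid hgS _ (Prod.le_def.2 ⟨show (condE S).1 ≤ p.1 by omega,
        show (condE S).2 ≤ p.2 by omega⟩)
  ext z
  constructor
  · intro hz
    by_cases hzT : z ∈ trackSet S 2 α
    · right
      rcases ((hTiff z).1 hzT).2 with ⟨e1, e2⟩ | ⟨e1, e2⟩
      · exact mem_deltaF.2 (Or.inl ⟨by omega, by omega⟩)
      · exact mem_deltaF.2 (Or.inr ⟨by omega, by omega⟩)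
    · exact Or.inl (hsplit z hz hzT)
  · rintro (hz | hz)
    · exact hSS' hz
    · exact hDS z hz

end PathRow
section PathCol

lemma path_col {S' : Set Z2} (hS' : IsGood S') (hl' : IsLocal S') (hne : S' ≠ N2oneone)
    (hf : condE S' - ((1 : ℤ), (1 : ℤ)) ∈ S')
    {S : Set Z2} (hgS : IsGood S)
    {n : ℕ} {α : ℕ → Om} (hTD : TrackData S n α)
    (hS'd : S' = S \ trackSet S n α)
    (hd1 : (condE S).1 ≤ (condE S').1 - 1)
    (hd2 : (condE S).2 ≤ (condE S').2) :
    S = S' ∪ DeltaUp (condE S' - ((1 : ℤ), (1 : ℤ))) := by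
  obtain ⟨h2c1, h2c2⟩ := two_le_cond hS' hl' hne hf
  have hSS' : S' ⊆ S := by rw [hS'd]; exact Set.diff_subset
  have hdisj : ∀ z ∈ trackSet S n α, z ∉ S' := by
    intro z hz hz'
    rw [hS'd] at hz'
    exact hz'.2 hz
  have hsplit : ∀ z ∈ S, z ∉ trackSet S n α → z ∈ S' := by
    intro z hz hnT; rw [hS'd]; exact ⟨hz, hnT⟩
  have hctail : ∀ y, (condE S').2 ≤ y → (((condE S').1 - 1, y) : Z2) ∈ trackSet S n α := by
    intro y hy
    have hyS : (((condE S').1 - 1, y) : Z2) ∈ S :=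
      condE_valid hgS _ (Prod.le_def.2 ⟨show (condE S).1 ≤ (condE S').1 - 1 by omega,
        show (condE S).2 ≤ y by omega⟩)
    by_contra hnT
    exact deltaF_not_mem hS'
      (mem_deltaF.2 (Or.inl ⟨rfl, show (condE S').2 - 1 < y by omega⟩))
      (hsplit _ hyS hnT)
  have hkillc : ∀ X W : ℤ, (condE S).1 ≤ X → ((X, W) : Z2) ∈ Af S → False := by
    intro X W hX haf
    exact af_kill haf
      (condE_valid hgS (X, max ((condE S).2) (W+1))
        (Prod.le_def.2 ⟨show (condE S).1 ≤ X by omega,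
          show (condE S).2 ≤ max ((condE S).2) (W+1) by omega⟩))
      (Or.inl ⟨rfl, show W < max ((condE S).2) (W+1) by omega⟩)
  rcases Nat.lt_or_ge n 2 with hn1 | hn2
  · exfalso
    have hn : n = 1 := by have := hTD.1; omega
    subst hn
    have hIA := hTD.2.1 0 (by omega)
    by_cases h2t : (α 0).2 = ⊤
    · obtain ⟨aa, hw, _⟩ := ia_snd_top hIA h2t
      have haaval : aa = (condE S').1 - 1 := by
        rcases track_mem_cases hTD (hctail (condE S').2 le_rfl) with hc|hc|hc|hc|hc
        · exfalso
          have h0 := congrArg Prod.snd hc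
          rw [iotaZ_snd, hw] at h0
          simp at h0
        · exfalso
          have h0 := congrArg Prod.snd hc
          rw [iotaZ_snd, hw] at h0
          simp at h0
        · exfalso
          have h0 : (((condE S').2 : ℤ) : WithTop ℤ) = (α 0).2 := hc.2.1
          rw [hw] at h0
          simp at h0
        · have h0 : ((((condE S').1 - 1 : ℤ)) : WithTop ℤ) = (α 0).1 := hc.2.1
          rw [hw] at h0
          have h0' : ((((condE S').1 - 1 : ℤ)) : WithTop ℤ) = (aa : WithTop ℤ) := h0
          exact_mod_cast h0'.symm
        · exfalso; obtain ⟨i, hi, _⟩ := hc; omega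
      have hfT : (((condE S').1 - 1, (condE S').2 - 1) : Z2) ∈ trackSet S 1 α := by
        refine Or.inl (Or.inr ⟨hSS' (fmem hf), ?_, ?_⟩)
        · rw [hw, haaval]
        · rw [hw]; exact WithTop.coe_lt_top _
      exact hdisj _ hfT (fmem hf)
    · obtain ⟨W, hW⟩ := WithTop.ne_top_iff_exists.1 h2t
      by_cases h1t : (α 0).1 = ⊤
      · have hrowW : ∀ y, (condE S').2 ≤ y → y = W := by
          intro y hy
          rcases track_mem_cases hTD (hctail y hy) with hc|hc|hc|hc|hc
          · exfalso
            have h0 := congrArg Prod.fst hc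
            rw [iotaZ_fst, h1t] at h0
            simp at h0
          · exfalso
            have h0 := congrArg Prod.fst hc
            rw [iotaZ_fst, h1t] at h0
            simp at h0
          · have h0 : ((y : ℤ) : WithTop ℤ) = (α 0).2 := hc.2.1
            rw [← hW] at h0
            exact_mod_cast h0
          · exfalso
            have h0 : ((((condE S').1 - 1 : ℤ)) : WithTop ℤ) = (α 0).1 := hc.2.1
            rw [h1t] at h0
            simp at h0
          · exfalso; obtain ⟨i, hi, _⟩ := hc; omega
        have e1 := hrowW (condE S').2 le_rfl
        have e2 := hrowW ((condE S').2 + 1) (by omega)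
        omega
      · obtain ⟨A, hA⟩ := WithTop.ne_top_iff_exists.1 h1t
        rcases track_mem_cases hTD
          (hctail (max (condE S').2 (W+1)) (le_max_left _ _)) with hc|hc|hc|hc|hc
        · have h0 := congrArg Prod.snd hc
          rw [iotaZ_snd, ← hW] at h0
          have : max (condE S').2 (W+1) = W := by exact_mod_cast h0
          omega
        · have h0 := congrArg Prod.snd hc
          rw [iotaZ_snd, ← hW] at h0
          have : max (condE S').2 (W+1) = W := by exact_mod_cast h0
          omega
        · have h0 : ((max (condE S').2 (W+1) : ℤ) : WithTop ℤ) = (α 0).2 := hc.2.1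
          rw [← hW] at h0
          have : max (condE S').2 (W+1) = W := by exact_mod_cast h0
          omega
        · have h0 : ((max (condE S').2 (W+1) : ℤ) : WithTop ℤ) < (α 0).2 := hc.2.2
          rw [← hW] at h0
          have : max (condE S').2 (W+1) < W := by exact_mod_cast h0
          omega
        · obtain ⟨i, hi, _⟩ := hc; omega
  -- n ≥ 2
  have h02 : (α 0).2 = ⊤ := by
    by_contra hcon
    obtain ⟨B0, hB0⟩ := WithTop.ne_top_iff_exists.1 hcon
    rcases track_mem_cases hTD
      (hctail (max (condE S').2 (B0+1)) (le_max_left _ _)) with hc|hc|hc|hc|hc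
    · have h0 := congrArg Prod.snd hc
      rw [iotaZ_snd, ← hB0] at h0
      have : max (condE S').2 (B0+1) = B0 := by exact_mod_cast h0
      omega
    · have h0 := congrArg Prod.snd hc
      rw [iotaZ_snd] at h0
      have hle : (α (n-1)).2 ≤ (α 0).2 := track_anti2' hTD 0 (n-1) (by omega) (by omega)
      rw [← h0, ← hB0] at hle
      have : max (condE S').2 (B0+1) ≤ B0 := by exact_mod_cast hle
      omega
    · have h0 := hc.2.1
      rw [← hB0] at h0
      have : max (condE S').2 (B0+1) = B0 := by exact_mod_cast h0
      omega
    · have h0 := hc.2.2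
      have hle : (α (n-1)).2 ≤ (α 0).2 := track_anti2' hTD 0 (n-1) (by omega) (by omega)
      have h1 := lt_of_lt_of_le h0 hle
      rw [← hB0] at h1
      have : max (condE S').2 (B0+1) < B0 := by exact_mod_cast h1
      omega
    · obtain ⟨i, hi, hzS, hdis⟩ := hc
      rcases hdis with ⟨e1, e2⟩ | ⟨e1, e2⟩
      · by_cases htop : (α i).2 = ⊤
        · have hle : (α i).2 ≤ (α 0).2 := track_anti2' hTD 0 i (by omega) (by omega)
          rw [htop, ← hB0] at hle
          simp at hle
        · obtain ⟨Wf, hWf⟩ := WithTop.ne_top_iff_exists.1 htop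
          exact hkillc ((condE S').1 - 1) Wf (by omega)
            (ia_finite_case (hTD.2.1 i (by omega)) e1.symm hWf.symm)
      · have hle : (α (i+1)).2 ≤ (α 0).2 := track_anti2' hTD 0 (i+1) (by omega) (by omega)
        rw [← e1, ← hB0] at hle
        have : max (condE S').2 (B0+1) ≤ B0 := by exact_mod_cast hle
        omega
  have h1fin : (α 0).1 ≠ ⊤ := ne_top_of_lt (hTD.2.2.1 0 1 (by omega) (by omega))
  obtain ⟨A, hA⟩ := WithTop.ne_top_iff_exists.1 h1fin
  have h2fin1 : (α 1).2 ≠ ⊤ := by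
    have h := track_anti2 hTD 0 (by omega)
    rw [h02] at h
    exact ne_top_of_lt h
  obtain ⟨B1, hB1⟩ := WithTop.ne_top_iff_exists.1 h2fin1
  have hAeq : A = (condE S').1 - 1 := by
    rcases track_mem_cases hTD
      (hctail (max (condE S').2 (B1+1)) (le_max_left _ _)) with hc|hc|hc|hc|hc
    · exfalso
      have h0 := congrArg Prod.snd hc
      rw [iotaZ_snd, h02] at h0
      simp at h0
    · exfalso
      have h0 := congrArg Prod.snd hc
      rw [iotaZ_snd] at h0
      have hle : (α (n-1)).2 ≤ (α 1).2 := track_anti2' hTD 1 (n-1) (by omega) (by omega)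
      rw [← h0, ← hB1] at hle
      have : max (condE S').2 (B1+1) ≤ B1 := by exact_mod_cast hle
      omega
    · exfalso
      have h0 := hc.2.1
      rw [h02] at h0
      simp at h0
    · exfalso
      have h0 := hc.2.2
      have hle : (α (n-1)).2 ≤ (α 1).2 := track_anti2' hTD 1 (n-1) (by omega) (by omega)
      have h1 := lt_of_lt_of_le h0 hle
      rw [← hB1] at h1
      have : max (condE S').2 (B1+1) < B1 := by exact_mod_cast h1
      omega
    · obtain ⟨i, hi, hzS, hdis⟩ := hc
      rcases hdis with ⟨e1, e2⟩ | ⟨e1, e2⟩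
      · rcases Nat.eq_zero_or_pos i with hi0 | hi1
        · subst hi0
          rw [← hA] at e1
          exact_mod_cast e1.symm
        · exfalso
          have hle : (α i).2 ≤ (α 1).2 := track_anti2' hTD 1 i (by omega) (by omega)
          have hnt : (α i).2 ≠ ⊤ := by
            rw [← hB1] at hle
            exact ne_top_of_le_ne_top (WithTop.coe_ne_top) hle
          obtain ⟨Wf, hWf⟩ := WithTop.ne_top_iff_exists.1 hnt
          exact hkillc ((condE S').1 - 1) Wf (by omega)
            (ia_finite_case (hTD.2.1 i (by omega)) e1.symm hWf.symm)
      · exfalso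
        have hle : (α (i+1)).2 ≤ (α 1).2 := track_anti2' hTD 1 (i+1) (by omega) (by omega)
        rw [← e1, ← hB1] at hle
        have : max (condE S').2 (B1+1) ≤ B1 := by exact_mod_cast hle
        omega
  have hX : (α 1).1 = ⊤ := by
    by_contra hcon
    obtain ⟨X, hXv⟩ := WithTop.ne_top_iff_exists.1 hcon
    have haf := ia_finite_case (hTD.2.1 1 (by omega)) hXv.symm hB1.symm
    have hAX : A < X := by
      have h := hTD.2.2.1 0 1 (by omega) (by omega)
      rw [← hA, ← hXv] at h
      exact_mod_cast h
    exact hkillc X B1 (by omega) haf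
  have hn2' : n = 2 := by
    by_contra hn3
    have h := hTD.2.2.1 1 2 (by omega) (by omega)
    rw [hX] at h
    exact not_top_lt h
  subst hn2'
  have hγ : α 0 ⊓ α 1 = ((((condE S').1 - 1 : ℤ) : WithTop ℤ), (B1 : WithTop ℤ)) := by
    rw [track_gamma hTD (show 0 + 1 < 2 by omega)]
    refine Prod.ext ?_ ?_
    · show (α 0).1 = _
      rw [← hA, hAeq]
    · show (α 1).2 = _
      rw [← hB1]
  have hTiff : ∀ z : Z2, z ∈ trackSet S 2 α ↔ z ∈ S ∧
      ((z.1 = (condE S').1 - 1 ∧ B1 < z.2) ∨ (z.2 = B1 ∧ (condE S').1 - 1 < z.1)) := by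
    intro z
    constructor
    · intro hz
      rcases track_mem_cases hTD hz with hc|hc|hc|hc|hc
      · exfalso
        have h0 : (z.2 : WithTop ℤ) = (α 0).2 := congrArg Prod.snd hc
        rw [h02] at h0
        simp at h0
      · exfalso
        have h0 : (z.1 : WithTop ℤ) = (α 1).1 := congrArg Prod.fst hc
        rw [hX] at h0
        simp at h0
      · exfalso
        have h0 : (z.2 : WithTop ℤ) = (α 0).2 := hc.2.1
        rw [h02] at h0
        simp at h0
      · exfalso
        have h0 : (z.1 : WithTop ℤ) = (α 1).1 := hc.2.1
        rw [hX] at h0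
        simp at h0
      · obtain ⟨i, hi, hzS, hdis⟩ := hc
        have hi0 : i = 0 := by omega
        subst hi0
        refine ⟨hzS, ?_⟩
        rcases hdis with ⟨e1, e2⟩ | ⟨e1, e2⟩
        · left
          constructor
          · rw [← hA, hAeq] at e1; exact_mod_cast e1
          · rw [← hB1] at e2; exact_mod_cast e2
        · right
          constructor
          · rw [← hB1] at e1; exact_mod_cast e1
          · rw [← hA, hAeq] at e2; exact_mod_cast e2
    · rintro ⟨hzS, hd⟩
      refine Or.inl (Or.inl (Or.inr ?_))
      simp only [Set.mem_iUnion, Finset.mem_range, exists_prop]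
      refine ⟨0, by omega, hzS, ?_⟩
      rw [show (0:ℕ) + 1 = 1 from rfl, hγ]
      exact upD_pair.2 hd
  have hsinf := ia_fst_top (hTD.2.1 1 (by omega)) hX
  obtain ⟨bv, hbv, hbm⟩ := hsinf
  have hb' : bv = B1 := by
    have h0 : (α 1).2 = (bv : WithTop ℤ) := congrArg Prod.snd hbv
    rw [← hB1] at h0
    exact_mod_cast h0.symm
  rw [hb'] at hbm
  have hrow := rowFull hgS hbm le_rfl
  have hB1lt : B1 < (condE S').2 := by
    have h := ((hTiff _).1 (hctail (condE S').2 le_rfl)).2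
    rcases h with ⟨e1, e2⟩ | ⟨e1, e2⟩
    · have e2' : B1 < (condE S').2 := e2
      exact e2'
    · have e2' : (condE S').1 - 1 < (condE S').1 - 1 := e2
      omega
  have hB1eq : B1 = (condE S').2 - 1 := by
    by_contra hne'
    have hKr : (((condE S').1 - 1, B1) : Z2) ∈ S := hrow _ (by omega)
    have hKrS' : (((condE S').1 - 1, B1) : Z2) ∈ S' := by
      refine hsplit _ hKr (fun hT => ?_)
      rcases ((hTiff _).1 hT).2 with ⟨e1, e2⟩ | ⟨e1, e2⟩
      · have e2' : B1 < B1 := e2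
        omega
      · have e2' : (condE S').1 - 1 < (condE S').1 - 1 := e2
        omega
    have hneq : (((condE S').1 - 1, B1) : Z2) ≠ (((condE S').1 - 1, (condE S').2 - 1) : Z2) := by
      intro hcon; have := congrArg Prod.snd hcon; simp only at this; omega
    obtain ⟨e, he, q1, q2, q3⟩ := (hS'.2.2.2.2.2 _ hKrS' _ (fmem hf) hneq).1 rfl
    have hq3 : e.2 = min B1 ((condE S').2 - 1) := q3 (show B1 ≠ (condE S').2 - 1 from hne')
    have heT : e ∈ trackSet S 2 α := by
      refine (hTiff e).2 ⟨hSS' he, Or.inr ⟨by omega, ?_⟩⟩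
      have q1' : (condE S').1 - 1 < e.1 := q1
      omega
    exact hdisj e heT he
  have hDS : ∀ p ∈ DeltaUp (condE S' - ((1 : ℤ), (1 : ℤ))), p ∈ S := by
    intro p hp
    rcases mem_deltaF.1 hp with ⟨e1, e2⟩ | ⟨e1, e2⟩
    · exact condE_valid hgS _ (Prod.le_def.2 ⟨show (condE S).1 ≤ p.1 by omega,
        show (condE S).2 ≤ p.2 by omega⟩)
    · have hm := hrow p.1 (by omega)
      rwa [show ((p.1, B1) : Z2) = p from Prod.ext rfl (by omega)] at hm
  ext z
  constructor
  · intro hz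
    by_cases hzT : z ∈ trackSet S 2 α
    · right
      rcases ((hTiff z).1 hzT).2 with ⟨e1, e2⟩ | ⟨e1, e2⟩
      · exact mem_deltaF.2 (Or.inl ⟨by omega, by omega⟩)
      · exact mem_deltaF.2 (Or.inr ⟨by omega, by omega⟩)
    · exact Or.inl (hsplit z hz hzT)
  · rintro (hz | hz)
    · exact hSS' hz
    · exact hDS z hz

end PathCol
/-- If `S' ≠ ℕ²(1,1)` is a local good semigroup whose
Frobenius vector `f(S') = c(S') − (1,1)` belongs to `S'`, then `S'` has
exactly one special parent, namely `S = S' ∪ Δ(f(S'))`. -/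
theorem unique_specialParent_of_frobenius_mem (S' : Set Z2) (hS' : IsGood S')
    (hl' : IsLocal S') (hne : S' ≠ N2oneone)
    (hf : condE S' - ((1 : ℤ), (1 : ℤ)) ∈ S') :
    ∀ S : Set Z2, SpecialParent S S' ↔
      S = S' ∪ DeltaUp (condE S' - ((1 : ℤ), (1 : ℤ))) := by
  intro S
  constructor
  · rintro ⟨hgS, _, T, ⟨⟨n, α, hTD, hTeq⟩, hbey⟩, hS'd⟩
    subst hTeq
    have hcmem : condE S' ∈ condSet S := by
      intro y hy
      have hy' := condE_valid hS' y hy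
      rw [hS'd] at hy'
      exact hy'.1
    have hle := condE_le hgS.1 hcmem
    obtain ⟨t, htT, htS, htc⟩ := hbey
    have hne2 : condE S ≠ condE S' := by
      intro hcon
      have ht' : t ∈ S' := condE_valid hS' t (hcon ▸ htc)
      rw [hS'd] at ht'
      exact ht'.2 htT
    have h1 := (Prod.le_def.1 hle).1
    have h2 := (Prod.le_def.1 hle).2
    rcases eq_or_lt_of_le h2 with he2 | hl2
    · have hl1 : (condE S).1 < (condE S').1 := by
        rcases eq_or_lt_of_le h1 with he1 | hl1
        · exact absurd (Prod.ext he1 he2) hne2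
        · exact hl1
      exact path_col hS' hl' hne hf hgS hTD hS'd (by omega) (by omega)
    · exact path_row hS' hl' hne hf hgS hTD hS'd (by omega) (by omega)
  · rintro rfl
    exact special_parent_union hS' hl' hne hf
end

section
/- Let A ⊆ ℕ² be such that there exists c ∈ ℕ² with c+ℕ² ⊆ ℕ²∖A, and suppose A = B₁ ∪ … ∪ B_h with B_l ∩ B_m = ∅ whenever l ≠ m. Then NL(A) ≤ Σ_{j=1}^h NL(B_j). -/
/-- `a ≪ b`: both coordinates strictly smaller. -/
def llt (a b : Z2) : Prop := a.1 < b.1 ∧ a.2 < b.2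

/-- `B`: the elements of `R` that are maximal with respect to `≤≤`. -/
def Bof (R : Set Z2) : Set Z2 := {a ∈ R | ∀ b ∈ R, ¬ llt a b}

/-- `C`: the elements of `B` expressible as the componentwise minimum of two
other elements of `B`. -/
def Cof (B : Set Z2) : Set Z2 :=
  {a ∈ B | ∃ b ∈ B, ∃ c ∈ B, b ≠ a ∧ c ≠ a ∧ a = b ⊓ c}

/-- One step of the level construction: `D = B ∖ C`. -/
def Dof (R : Set Z2) : Set Z2 := Bof R \ Cof (Bof R)

/-- `NLrem A i = D^(1) ∪ ⋯ ∪ D^(i)`: the union of the first `i` levels of `A`. -/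
def NLrem (A : Set Z2) : ℕ → Set Z2
  | 0 => ∅
  | i + 1 => NLrem A i ∪ Dof (A \ NLrem A i)

/-- `NL(A)`: the number of levels of `A`, i.e. the least `N` with
`A = D^(1) ∪ ⋯ ∪ D^(N)`. -/
noncomputable def NL (A : Set Z2) : ℕ := sInf {N : ℕ | A ⊆ NLrem A N}

/-- The pseudo-Frobenius elements `PF(S) = {α ∈ ℕ²∖S : α + M ⊆ S}`. -/
def PFset (S : Set Z2) : Set Z2 :=
  {a : Z2 | a ∈ orth ∧ a ∉ S ∧ ∀ m ∈ S, m ≠ 0 → a + m ∈ S}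

/-- The type `t(S) = NL(PF(S))`. -/
noncomputable def typ (S : Set Z2) : ℕ := NL (PFset S)


namespace NLaux

/-- Survival predicate: `a` survives one step of the level construction on `E`. -/
def survP (E : Set Z2) (a : Z2) : Prop :=
  (∃ b ∈ E, llt a b) ∨
    ((∃ b ∈ E, b.1 = a.1 ∧ a.2 < b.2) ∧ (∃ b ∈ E, b.2 = a.2 ∧ a.1 < b.1))

/-- Iterated survivors. -/
def surv (A : Set Z2) : ℕ → Set Z2
  | 0 => A
  | k + 1 => {a ∈ surv A k | survP (surv A k) a}

theorem survP_mono {E F : Set Z2} (h : E ⊆ F) {a : Z2} (hs : survP E a) : survP F a := by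
  rcases hs with ⟨b, hb, hab⟩ | ⟨⟨b, hb, h1, h2⟩, ⟨e, he, h3, h4⟩⟩
  · exact Or.inl ⟨b, h hb, hab⟩
  · exact Or.inr ⟨⟨b, h hb, h1, h2⟩, ⟨e, h he, h3, h4⟩⟩

theorem surv_subset (A : Set Z2) : ∀ k, surv A k ⊆ A
  | 0 => le_refl _
  | k + 1 => fun _ ha => surv_subset A k ha.1

theorem surv_succ_subset (A : Set Z2) (k : ℕ) : surv A (k + 1) ⊆ surv A k :=
  fun _ ha => ha.1

theorem surv_anti (A : Set Z2) {j k : ℕ} (h : j ≤ k) : surv A k ⊆ surv A j := by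
  induction k with
  | zero => simp_all
  | succ k IH =>
    rcases Nat.eq_or_lt_of_le h with rfl | hlt
    · exact le_refl _
    · exact (surv_succ_subset A k).trans (IH (Nat.lt_succ_iff.mp hlt))

theorem surv_mono {A B : Set Z2} (h : A ⊆ B) : ∀ k, surv A k ⊆ surv B k
  | 0 => h
  | k + 1 => fun a ha => ⟨surv_mono h k ha.1, survP_mono (surv_mono h k) ha.2⟩

/-- The one-step removal `Dof` consists exactly of the non-survivors. -/
theorem Dof_eq (R : Set Z2) : Dof R = {a ∈ R | ¬ survP R a} := by
  ext a
  constructor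
  · rintro ⟨⟨haR, hmax⟩, hnc⟩
    refine ⟨haR, ?_⟩
    rintro (⟨b, hbR, hab⟩ | ⟨⟨bN, hbN, h1, h2⟩, ⟨bE, hbE, h3, h4⟩⟩)
    · exact hmax b hbR hab
    · apply hnc
      refine ⟨⟨haR, hmax⟩, bN, ⟨hbN, fun x hx hlx => hmax x hx ⟨h1 ▸ hlx.1, lt_trans h2 hlx.2⟩⟩,
        bE, ⟨hbE, fun x hx hlx => hmax x hx ⟨lt_trans h4 hlx.1, h3 ▸ hlx.2⟩⟩,
        fun hh => absurd (hh ▸ h2) (lt_irrefl _), fun hh => absurd (hh ▸ h4) (lt_irrefl _), ?_⟩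
      have e1 : a.1 = (bN ⊓ bE).1 := by
        rw [Prod.fst_inf]
        omega
      have e2 : a.2 = (bN ⊓ bE).2 := by
        rw [Prod.snd_inf]
        omega
      exact Prod.ext_iff.mpr ⟨e1, e2⟩
  · rintro ⟨haR, hns⟩
    have haB : a ∈ Bof R := ⟨haR, fun b hb hl => hns (Or.inl ⟨b, hb, hl⟩)⟩
    refine ⟨haB, ?_⟩
    rintro ⟨-, b, hbB, e, heB, hbne, hene, heq⟩
    apply hns
    have hab : a ≤ b := heq ▸ inf_le_left
    have hae : a ≤ e := heq ▸ inf_le_right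
    have hb1 : a.1 ≤ b.1 := hab.1
    have hb2 : a.2 ≤ b.2 := hab.2
    have he1 : a.1 ≤ e.1 := hae.1
    have he2 : a.2 ≤ e.2 := hae.2
    have hnb : ¬ llt a b := haB.2 b hbB.1
    have hne' : ¬ llt a e := haB.2 e heB.1
    simp only [llt, not_and, not_lt] at hnb hne'
    have hbne' : b.1 ≠ a.1 ∨ b.2 ≠ a.2 := by
      by_contra hcc
      push_neg at hcc
      exact hbne (Prod.ext_iff.mpr ⟨hcc.1, hcc.2⟩)
    have hene' : e.1 ≠ a.1 ∨ e.2 ≠ a.2 := by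
      by_contra hcc
      push_neg at hcc
      exact hene (Prod.ext_iff.mpr ⟨hcc.1, hcc.2⟩)
    have hmin1 : a.1 = min b.1 e.1 := by
      have := congrArg Prod.fst heq
      rwa [Prod.fst_inf] at this
    have hmin2 : a.2 = min b.2 e.2 := by
      have := congrArg Prod.snd heq
      rwa [Prod.snd_inf] at this
    right
    rcases lt_or_eq_of_le hb1 with hb1' | hb1'
    · -- b is east; then e must be north
      have hb2' : b.2 = a.2 := le_antisymm (hnb hb1') hb2
      have he1' : e.1 = a.1 := by omega
      have he2' : a.2 < e.2 := by
        rcases hene' with hx | hx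
        · exact absurd he1' hx
        · omega
      exact ⟨⟨e, heB.1, he1', he2'⟩, ⟨b, hbB.1, hb2', hb1'⟩⟩
    · -- b is north; then e must be east
      have hb2' : a.2 < b.2 := by
        rcases hbne' with hx | hx
        · exact absurd hb1'.symm hx
        · omega
      have he1' : a.1 < e.1 := by omega
      have he2' : e.2 = a.2 := le_antisymm (hne' he1') he2
      exact ⟨⟨b, hbB.1, hb1'.symm, hb2'⟩, ⟨e, heB.1, he2', he1'⟩⟩

theorem NLrem_eq (A : Set Z2) : ∀ N, NLrem A N = A \ surv A N
  | 0 => by simp [NLrem, surv]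
  | N + 1 => by
    have hs : surv A N ⊆ A := surv_subset A N
    have IH := NLrem_eq A N
    show NLrem A N ∪ Dof (A \ NLrem A N) = A \ surv A (N + 1)
    rw [IH, Set.diff_diff_cancel_left hs, Dof_eq]
    ext a
    simp only [Set.mem_union, Set.mem_diff, Set.mem_setOf_eq, surv]
    constructor
    · rintro (⟨haA, hns⟩ | ⟨haS, hnp⟩)
      · exact ⟨haA, fun hx => hns hx.1⟩
      · exact ⟨hs haS, fun hx => hnp hx.2⟩
    · rintro ⟨haA, hn⟩
      by_cases haS : a ∈ surv A N
      · exact Or.inr ⟨haS, fun hp => hn ⟨haS, hp⟩⟩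
      · exact Or.inl ⟨haA, haS⟩

theorem NL_eq_sInf (A : Set Z2) : NL A = sInf {N : ℕ | surv A N = ∅} := by
  unfold NL
  congr 1
  ext N
  simp only [Set.mem_setOf_eq, NLrem_eq]
  constructor
  · intro hsub
    rw [Set.eq_empty_iff_forall_notMem]
    intro a ha
    exact (hsub (surv_subset A N ha)).2 ha
  · intro hemp
    rw [hemp]
    simp

/-- The upper set of `a`. -/
def upSet (a : Z2) : Set Z2 := {x : Z2 | a ≤ x}

theorem survP_restrict {S : Set Z2} {c a : Z2} (hac : a ∈ upSet c)
    (hs : survP S a) : survP (S ∩ upSet c) a := by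
  have hup : ∀ b : Z2, a ≤ b → b ∈ upSet c := fun b hb => le_trans hac hb
  rcases hs with ⟨b, hb, hab⟩ | ⟨⟨b, hb, h1, h2⟩, ⟨e, he, h3, h4⟩⟩
  · exact Or.inl ⟨b, ⟨hb, hup b ⟨le_of_lt hab.1, le_of_lt hab.2⟩⟩, hab⟩
  · exact Or.inr ⟨⟨b, ⟨hb, hup b ⟨le_of_eq h1.symm, le_of_lt h2⟩⟩, h1, h2⟩,
      ⟨e, ⟨he, hup e ⟨le_of_lt h4, le_of_eq h3.symm⟩⟩, h3, h4⟩⟩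

theorem surv_inter_up (A : Set Z2) (c : Z2) :
    ∀ k, surv (A ∩ upSet c) k = surv A k ∩ upSet c
  | 0 => rfl
  | k + 1 => by
    have IH := surv_inter_up A c k
    ext a
    constructor
    · rintro ⟨haS, hP⟩
      rw [IH] at haS hP
      exact ⟨⟨haS.1, survP_mono Set.inter_subset_left hP⟩, haS.2⟩
    · rintro ⟨⟨haS, hP⟩, hup⟩
      refine ⟨IH ▸ ⟨haS, hup⟩, ?_⟩
      rw [IH]
      exact survP_restrict hup hP

theorem f1 {X : Set Z2} {a d : Z2} (haX : a ∈ X) (h : llt a d) :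
    ∀ k, d ∈ surv X k → a ∈ surv X k
  | 0, _ => haX
  | k + 1, hd => ⟨f1 haX h k hd.1, Or.inl ⟨d, hd.1, h⟩⟩

theorem f1' {X : Set Z2} {a d : Z2} {k : ℕ} (haX : a ∈ X) (h : llt a d)
    (hd : d ∈ surv X k) : a ∈ surv X (k + 1) :=
  ⟨f1 haX h k hd, Or.inl ⟨d, hd, h⟩⟩

theorem f2 {X : Set Z2} {a dN dE : Z2} (haX : a ∈ X)
    (hN : dN.1 = a.1 ∧ a.2 < dN.2) (hE : dE.2 = a.2 ∧ a.1 < dE.1) :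
    ∀ k, dN ∈ surv X k → dE ∈ surv X k → a ∈ surv X k
  | 0, _, _ => haX
  | k + 1, hdN, hdE =>
    ⟨f2 haX hN hE k hdN.1 hdE.1, Or.inr ⟨⟨dN, hdN.1, hN⟩, ⟨dE, hdE.1, hE⟩⟩⟩

theorem f2' {X : Set Z2} {a dN dE : Z2} {k : ℕ} (haX : a ∈ X)
    (hN : dN.1 = a.1 ∧ a.2 < dN.2) (hE : dE.2 = a.2 ∧ a.1 < dE.1)
    (hdN : dN ∈ surv X k) (hdE : dE ∈ surv X k) : a ∈ surv X (k + 1) :=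
  ⟨f2 haX hN hE k hdN hdE, Or.inr ⟨⟨dN, hdN, hN⟩, ⟨dE, hdE, hE⟩⟩⟩

theorem lt_NL' {X : Set Z2} {k : ℕ} (h : (surv X k).Nonempty)
    (hbdd : {N : ℕ | surv X N = ∅}.Nonempty) : k < sInf {N : ℕ | surv X N = ∅} := by
  by_contra hle
  push_neg at hle
  have hmem : surv X (sInf {N : ℕ | surv X N = ∅}) = ∅ := Nat.sInf_mem hbdd
  obtain ⟨a, ha⟩ := h
  have : a ∈ surv X (sInf {N : ℕ | surv X N = ∅}) := surv_anti X hle ha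
  rw [hmem] at this
  exact this

theorem surv_ne_of_lt_NL {X : Set Z2} {k : ℕ}
    (h : k < sInf {N : ℕ | surv X N = ∅}) : (surv X k).Nonempty := by
  rw [Set.nonempty_iff_ne_empty]
  intro hemp
  exact absurd (Nat.sInf_le hemp) (Nat.not_le.mpr h)

theorem NL_mono' {X Y : Set Z2} (hXY : X ⊆ Y)
    (hb : {N : ℕ | surv Y N = ∅}.Nonempty) :
    sInf {N : ℕ | surv X N = ∅} ≤ sInf {N : ℕ | surv Y N = ∅} := by
  apply Nat.sInf_le
  have hmem : surv Y (sInf {N : ℕ | surv Y N = ∅}) = ∅ := Nat.sInf_mem hb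
  have := surv_mono hXY (sInf {N : ℕ | surv Y N = ∅})
  rw [hmem] at this
  exact Set.subset_empty_iff.mp this

theorem surv_bound {A : Set Z2} {c : Z2} (hA : A ⊆ orth) (hco : c ∈ orth)
    (hcA : ∀ x : Z2, c ≤ x → x ∉ A) :
    ∀ k, ∀ a ∈ surv A k, k ≤ (c.1 - a.1).toNat + (c.2 - a.2).toNat := by
  intro k
  induction k with
  | zero => intro a _; exact Nat.zero_le _
  | succ k IH =>
    rintro a ⟨hak, hs⟩
    have haA : a ∈ A := surv_subset A k hak
    have haO : 0 ≤ a.1 ∧ 0 ≤ a.2 := hA haA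
    have hca : ¬ (c.1 ≤ a.1) ∨ ¬ (c.2 ≤ a.2) := by
      have : ¬ (c ≤ a) := fun hle => hcA a hle haA
      rw [Prod.le_def, not_and_or] at this
      exact this
    have hc1 : (0:ℤ) ≤ c.1 := hco.1
    have hc2 : (0:ℤ) ≤ c.2 := hco.2
    rcases hs with ⟨b, hbk, hab⟩ | ⟨⟨bN, hbNk, hN1, hN2⟩, ⟨bE, hbEk, hE1, hE2⟩⟩
    · have hbA : b ∈ A := surv_subset A k hbk
      have hbO : 0 ≤ b.1 ∧ 0 ≤ b.2 := hA hbA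
      have hcb : ¬ (c.1 ≤ b.1) ∨ ¬ (c.2 ≤ b.2) := by
        have : ¬ (c ≤ b) := fun hle => hcA b hle hbA
        rw [Prod.le_def, not_and_or] at this
        exact this
      have hIH := IH b hbk
      obtain ⟨hab1, hab2⟩ := hab
      omega
    · have hbNA : bN ∈ A := surv_subset A k hbNk
      have hbEA : bE ∈ A := surv_subset A k hbEk
      have hbNO : 0 ≤ bN.1 ∧ 0 ≤ bN.2 := hA hbNA
      have hbEO : 0 ≤ bE.1 ∧ 0 ≤ bE.2 := hA hbEA
      have hcbN : ¬ (c.1 ≤ bN.1) ∨ ¬ (c.2 ≤ bN.2) := by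
        have : ¬ (c ≤ bN) := fun hle => hcA bN hle hbNA
        rw [Prod.le_def, not_and_or] at this
        exact this
      have hcbE : ¬ (c.1 ≤ bE.1) ∨ ¬ (c.2 ≤ bE.2) := by
        have : ¬ (c ≤ bE) := fun hle => hcA bE hle hbEA
        rw [Prod.le_def, not_and_or] at this
        exact this
      have hIHN := IH bN hbNk
      have hIHE := IH bE hbEk
      omega

noncomputable def NLu (X : Set Z2) : ℕ := sInf {N : ℕ | surv X N = ∅}

theorem lt_NLu {X : Set Z2} {k : ℕ} (h : (surv X k).Nonempty)
    (hbdd : {N : ℕ | surv X N = ∅}.Nonempty) : k < NLu X := lt_NL' h hbdd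

theorem surv_ne_of_lt_NLu {X : Set Z2} {k : ℕ} (h : k < NLu X) :
    (surv X k).Nonempty := surv_ne_of_lt_NL h

theorem NLu_mono {X Y : Set Z2} (hXY : X ⊆ Y)
    (hb : {N : ℕ | surv Y N = ∅}.Nonempty) : NLu X ≤ NLu Y := NL_mono' hXY hb

theorem NL_eq_NLu (A : Set Z2) : NL A = NLu A := NL_eq_sInf A

end NLaux

open NLaux in
/-- If `A ⊆ ℕ²` satisfies `c + ℕ² ⊆ ℕ²∖A` for some
`c ∈ ℕ²` and `A = B₁ ∪ … ∪ B_h` with the `B_j` pairwise disjoint, then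
`NL(A) ≤ Σⱼ NL(B_j)`. -/
theorem NL_le_sum_NL (A : Set Z2) (hA : A ⊆ orth)
    (hc : ∃ c ∈ orth, ∀ x : Z2, c ≤ x → x ∉ A)
    (h : ℕ) (B : Fin h → Set Z2)
    (hU : A = ⋃ j, B j)
    (hdisj : ∀ l m, l ≠ m → B l ∩ B m = ∅) :
    NL A ≤ ∑ j, NL (B j) := by
  classical
  obtain ⟨c, hco, hcA⟩ := hc
  set M : ℕ := c.1.toNat + c.2.toNat + 1 with hM
  have hAsurv : surv A M = ∅ := by
    rw [Set.eq_empty_iff_forall_notMem]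
    intro a ha
    have hb := surv_bound hA hco hcA M a ha
    have haO : 0 ≤ a.1 ∧ 0 ≤ a.2 := hA (surv_subset A M ha)
    have hc1 : (0:ℤ) ≤ c.1 := hco.1
    have hc2 : (0:ℤ) ≤ c.2 := hco.2
    omega
  have hbdd : ∀ X : Set Z2, X ⊆ A → {N : ℕ | surv X N = ∅}.Nonempty := by
    intro X hX
    refine ⟨M, ?_⟩
    have hsub := surv_mono hX M
    rw [hAsurv] at hsub
    exact Set.subset_empty_iff.mp hsub
  have hBsub : ∀ j, B j ⊆ A := by
    intro j
    rw [hU]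
    exact Set.subset_iUnion B j
  have hBup : ∀ (j : Fin h) (a : Z2), B j ∩ upSet a ⊆ A := fun j a =>
    Set.inter_subset_left.trans (hBsub j)
  have key : ∀ k, ∀ a ∈ surv A k, k + 1 ≤ ∑ j, NLu (B j ∩ upSet a) := by
    intro k
    induction k with
    | zero =>
      intro a ha
      have haA : a ∈ A := ha
      rw [hU, Set.mem_iUnion] at haA
      obtain ⟨j1, haj⟩ := haA
      have h0 : 0 < NLu (B j1 ∩ upSet a) :=
        lt_NLu ⟨a, haj, le_refl a⟩ (hbdd _ (hBup j1 a))
      calc (1:ℕ) ≤ NLu (B j1 ∩ upSet a) := h0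
        _ ≤ ∑ j, NLu (B j ∩ upSet a) :=
            Finset.single_le_sum (f := fun j => NLu (B j ∩ upSet a)) (fun i _ => Nat.zero_le _) (Finset.mem_univ j1)
    | succ k IH =>
      rintro a ⟨hak, hs⟩
      have haA : a ∈ A := surv_subset A k hak
      have haj' := haA
      rw [hU, Set.mem_iUnion] at haj'
      obtain ⟨j1, haj⟩ := haj'
      have haj1 : a ∈ B j1 ∩ upSet a := ⟨haj, le_refl a⟩
      rcases hs with ⟨b, hbk, hab⟩ | ⟨⟨bN, hbNk, hN1, hN2⟩, ⟨bE, hbEk, hE1, hE2⟩⟩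
      · have hab' : a ≤ b := ⟨le_of_lt hab.1, le_of_lt hab.2⟩
        have hup : upSet b ⊆ upSet a := fun x hx => le_trans hab' hx
        have hmono : ∀ j, NLu (B j ∩ upSet b) ≤ NLu (B j ∩ upSet a) := fun j =>
          NLu_mono (Set.inter_subset_inter_right _ hup) (hbdd _ (hBup j a))
        have hslack : NLu (B j1 ∩ upSet b) < NLu (B j1 ∩ upSet a) := by
          rcases Nat.eq_zero_or_pos (NLu (B j1 ∩ upSet b)) with h0 | hpos
          · rw [h0]
            exact lt_NLu ⟨a, haj1⟩ (hbdd _ (hBup j1 a))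
          · obtain ⟨m, hm⟩ : ∃ m, NLu (B j1 ∩ upSet b) = m + 1 :=
              ⟨NLu (B j1 ∩ upSet b) - 1, by omega⟩
            have hne : (surv (B j1 ∩ upSet b) m).Nonempty :=
              surv_ne_of_lt_NLu (by omega)
            obtain ⟨d, hd⟩ := hne
            have hset : B j1 ∩ upSet b = (B j1 ∩ upSet a) ∩ upSet b := by
              ext x
              exact ⟨fun hx => ⟨⟨hx.1, hup hx.2⟩, hx.2⟩, fun hx => ⟨hx.1.1, hx.2⟩⟩
            rw [hset, surv_inter_up] at hd
            have hdup : b ≤ d := hd.2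
            have hlltd : llt a d := ⟨lt_of_lt_of_le hab.1 hdup.1, lt_of_lt_of_le hab.2 hdup.2⟩
            have hmem : a ∈ surv (B j1 ∩ upSet a) (m + 1) := f1' haj1 hlltd hd.1
            have := lt_NLu ⟨a, hmem⟩ (hbdd _ (hBup j1 a))
            omega
        have hsum : ∑ j, NLu (B j ∩ upSet b) < ∑ j, NLu (B j ∩ upSet a) :=
          Finset.sum_lt_sum (fun i _ => hmono i) ⟨j1, Finset.mem_univ j1, hslack⟩
        have hIH := IH b hbk
        omega
      · have habN : a ≤ bN := ⟨le_of_eq hN1.symm, le_of_lt hN2⟩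
        have habE : a ≤ bE := ⟨le_of_lt hE2, le_of_eq hE1.symm⟩
        have hupN : upSet bN ⊆ upSet a := fun x hx => le_trans habN hx
        have hupE : upSet bE ⊆ upSet a := fun x hx => le_trans habE hx
        have hmonoN : ∀ j, NLu (B j ∩ upSet bN) ≤ NLu (B j ∩ upSet a) := fun j =>
          NLu_mono (Set.inter_subset_inter_right _ hupN) (hbdd _ (hBup j a))
        have hmonoE : ∀ j, NLu (B j ∩ upSet bE) ≤ NLu (B j ∩ upSet a) := fun j =>
          NLu_mono (Set.inter_subset_inter_right _ hupE) (hbdd _ (hBup j a))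
        have hIHN := IH bN hbNk
        have hIHE := IH bE hbEk
        by_contra hcon
        push_neg at hcon
        have hsumN : ∑ j, NLu (B j ∩ upSet bN) ≤ ∑ j, NLu (B j ∩ upSet a) :=
          Finset.sum_le_sum (fun i _ => hmonoN i)
        have hsumE : ∑ j, NLu (B j ∩ upSet bE) ≤ ∑ j, NLu (B j ∩ upSet a) :=
          Finset.sum_le_sum (fun i _ => hmonoE i)
        have heqN : NLu (B j1 ∩ upSet bN) = NLu (B j1 ∩ upSet a) := by
          by_contra hne
          have hlt : NLu (B j1 ∩ upSet bN) < NLu (B j1 ∩ upSet a) :=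
            lt_of_le_of_ne (hmonoN j1) hne
          have := Finset.sum_lt_sum (fun i _ => hmonoN i) ⟨j1, Finset.mem_univ j1, hlt⟩
          omega
        have heqE : NLu (B j1 ∩ upSet bE) = NLu (B j1 ∩ upSet a) := by
          by_contra hne
          have hlt : NLu (B j1 ∩ upSet bE) < NLu (B j1 ∩ upSet a) :=
            lt_of_le_of_ne (hmonoE j1) hne
          have := Finset.sum_lt_sum (fun i _ => hmonoE i) ⟨j1, Finset.mem_univ j1, hlt⟩
          omega
        have hn1 : 0 < NLu (B j1 ∩ upSet a) := lt_NLu ⟨a, haj1⟩ (hbdd _ (hBup j1 a))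
        obtain ⟨m, hm⟩ : ∃ m, NLu (B j1 ∩ upSet a) = m + 1 :=
          ⟨NLu (B j1 ∩ upSet a) - 1, by omega⟩
        have hneN : (surv (B j1 ∩ upSet bN) m).Nonempty :=
          surv_ne_of_lt_NLu (by omega)
        obtain ⟨dN, hdN⟩ := hneN
        have hsetN : B j1 ∩ upSet bN = (B j1 ∩ upSet a) ∩ upSet bN := by
          ext x
          exact ⟨fun hx => ⟨⟨hx.1, hupN hx.2⟩, hx.2⟩, fun hx => ⟨hx.1.1, hx.2⟩⟩
        rw [hsetN, surv_inter_up] at hdN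
        have hdNup : bN ≤ dN := hdN.2
        have hdN2 : a.2 < dN.2 := lt_of_lt_of_le hN2 hdNup.2
        have hdN1 : dN.1 = a.1 := by
          by_cases hl : llt a dN
          · exfalso
            have := lt_NLu ⟨a, f1' haj1 hl hdN.1⟩ (hbdd _ (hBup j1 a))
            omega
          · simp only [llt, not_and, not_lt] at hl
            have hge : a.1 ≤ dN.1 := hN1 ▸ hdNup.1
            rcases eq_or_lt_of_le hge with he | hlt
            · exact he.symm
            · exact absurd (hl hlt) (not_le.mpr hdN2)
        have hneE : (surv (B j1 ∩ upSet bE) m).Nonempty :=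
          surv_ne_of_lt_NLu (by omega)
        obtain ⟨dE, hdE⟩ := hneE
        have hsetE : B j1 ∩ upSet bE = (B j1 ∩ upSet a) ∩ upSet bE := by
          ext x
          exact ⟨fun hx => ⟨⟨hx.1, hupE hx.2⟩, hx.2⟩, fun hx => ⟨hx.1.1, hx.2⟩⟩
        rw [hsetE, surv_inter_up] at hdE
        have hdEup : bE ≤ dE := hdE.2
        have hdE1 : a.1 < dE.1 := lt_of_lt_of_le hE2 hdEup.1
        have hdE2 : dE.2 = a.2 := by
          by_cases hl : llt a dE
          · exfalso
            have := lt_NLu ⟨a, f1' haj1 hl hdE.1⟩ (hbdd _ (hBup j1 a))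
            omega
          · simp only [llt, not_and, not_lt] at hl
            have hge : a.2 ≤ dE.2 := hE1 ▸ hdEup.2
            rcases eq_or_lt_of_le hge with he | hlt
            · exact he.symm
            · exact absurd (hl hdE1) (not_le.mpr hlt)
        have hmem : a ∈ surv (B j1 ∩ upSet a) (m + 1) :=
          f2' haj1 ⟨hdN1, hdN2⟩ ⟨hdE2, hdE1⟩ hdN.1 hdE.1
        have := lt_NLu ⟨a, hmem⟩ (hbdd _ (hBup j1 a))
        omega
  have hTempty : surv A (∑ j, NL (B j)) = ∅ := by
    rw [Set.eq_empty_iff_forall_notMem]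
    intro a ha
    have h1 := key _ a ha
    have h2 : ∀ j, NLu (B j ∩ upSet a) ≤ NL (B j) := by
      intro j
      rw [NL_eq_NLu]
      exact NLu_mono Set.inter_subset_left (hbdd _ (hBsub j))
    have h3 : ∑ j, NLu (B j ∩ upSet a) ≤ ∑ j, NL (B j) :=
      Finset.sum_le_sum (fun i _ => h2 i)
    omega
  rw [NL_eq_NLu]
  exact Nat.sInf_le hTempty
end

section
/- Let S ⊆ ℕ² be a local good semigroup, let I be a relative good ideal of S, and let α ∈ S be such that α+I ⊆ S. Then (α+I) ∪ {0} is a good semigroup; moreover, for every relative good ideal E of S with E ⊆ I, the set α+E is a relative good ideal of the good semigroup (α+I) ∪ {0}. -/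
lemma aux_add_inf (a x y : Z2) : a + (x ⊓ y) = (a + x) ⊓ (a + y) := by
  simp only [Prod.ext_iff, Prod.inf_def, Prod.fst_add, Prod.snd_add]
  constructor <;> omega

lemma aux_G3P_shift {E : Set Z2} (a : Z2) (h : G3P E) :
    G3P ((fun x => a + x) '' E) := by
  rintro _ ⟨x, hx, rfl⟩ _ ⟨y, hy, rfl⟩ hne
  have hxy : x ≠ y := fun h' => hne (by rw [h'])
  obtain ⟨h1, h2⟩ := h x hx y hy hxy
  constructor
  · intro heq
    simp only [Prod.fst_add] at heq
    obtain ⟨e, he, he1, he2, he3⟩ := h1 (by omega)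
    refine ⟨a + e, ⟨e, he, rfl⟩, ?_, ?_, ?_⟩
    · simp only [Prod.fst_add]; omega
    · simp only [Prod.snd_add]; omega
    · intro hne2
      simp only [Prod.snd_add] at hne2 ⊢
      have := he3 (by omega); omega
  · intro heq
    simp only [Prod.snd_add] at heq
    obtain ⟨e, he, he1, he2, he3⟩ := h2 (by omega)
    refine ⟨a + e, ⟨e, he, rfl⟩, ?_, ?_, ?_⟩
    · simp only [Prod.snd_add]; omega
    · simp only [Prod.fst_add]; omega
    · intro hne2
      simp only [Prod.fst_add] at hne2 ⊢
      have := he3 (by omega); omega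

/-- If `I` is a relative good ideal of a local good
semigroup `S ⊆ ℕ²` and `α ∈ S` satisfies `α + I ⊆ S`, then `(α+I) ∪ {0}` is a
good semigroup, and for every relative good ideal `E ⊆ I` of `S` the set
`α + E` is a relative good ideal of `(α+I) ∪ {0}`. -/
theorem shift_ideal_good (S I : Set Z2) (hS : IsGood S) (hl : IsLocal S)
    (hI : IsRelGoodIdeal S I) (a : Z2) (ha : a ∈ S) (haI : ∀ x ∈ I, a + x ∈ S) :
    IsGood ((fun x => a + x) '' I ∪ {(0 : Z2)}) ∧
    ∀ E : Set Z2, IsRelGoodIdeal S E → E ⊆ I →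
      IsRelGoodIdeal ((fun x => a + x) '' I ∪ {(0 : Z2)}) ((fun x => a + x) '' E) := by
  obtain ⟨hSo, hS0, hSadd, hSmin, ⟨δ, hδ⟩, hSg3⟩ := hS
  obtain ⟨⟨e0, he0⟩, hIid, hIb, hImin, hIg3⟩ := hI
  set T : Set Z2 := (fun x => a + x) '' I ∪ {(0 : Z2)} with hTdef
  have hmemT : ∀ u, u ∈ T ↔ (∃ x ∈ I, a + x = u) ∨ u = 0 := by
    intro u
    constructor
    · rintro (⟨x, hx, rfl⟩ | h)
      · exact Or.inl ⟨x, hx, rfl⟩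
      · exact Or.inr h
    · rintro (⟨x, hx, rfl⟩ | rfl)
      · exact Or.inl ⟨x, hx, rfl⟩
      · exact Or.inr rfl
  have h0T : (0 : Z2) ∈ T := (hmemT 0).mpr (Or.inr rfl)
  have hTS : ∀ u ∈ T, u ∈ S := by
    intro u hu
    rcases (hmemT u).mp hu with ⟨x, hx, rfl⟩ | rfl
    · exact haI x hx
    · exact hS0
  have hTorth : T ⊆ orth := fun u hu => hSo (hTS u hu)
  have hTadd : ∀ u ∈ T, ∀ v ∈ T, u + v ∈ T := by
    intro u hu v hv
    rcases (hmemT u).mp hu with ⟨x, hx, rfl⟩ | rfl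
    · rcases (hmemT v).mp hv with ⟨y, hy, rfl⟩ | rfl
      · refine (hmemT _).mpr (Or.inl ⟨x + (a + y), hIid x hx _ (haI y hy), ?_⟩)
        abel
      · simpa using hu
    · simpa using hv
  have hTmin : MinClosed T := by
    intro u hu v hv
    rcases (hmemT u).mp hu with ⟨x, hx, rfl⟩ | rfl
    · rcases (hmemT v).mp hv with ⟨y, hy, rfl⟩ | rfl
      · refine (hmemT _).mpr (Or.inl ⟨x ⊓ y, hImin x hx y hy, aux_add_inf a x y⟩)
      · have h0 : (0 : Z2) ≤ a + x := by
          have := hTorth hu; exact ⟨this.1, this.2⟩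
        rw [inf_eq_right.mpr h0]; exact h0T
    · have h0 : (0 : Z2) ≤ v := by
        have := hTorth hv; exact ⟨this.1, this.2⟩
      rw [inf_eq_left.mpr h0]; exact h0T
  have hTg3 : G3P T := by
    have hG := aux_G3P_shift a hIg3
    intro u hu v hv huv
    rcases (hmemT u).mp hu with ⟨x, hx, rfl⟩ | rfl
    · rcases (hmemT v).mp hv with ⟨y, hy, rfl⟩ | rfl
      · obtain ⟨H1, H2⟩ := hG (a + x) ⟨x, hx, rfl⟩ (a + y) ⟨y, hy, rfl⟩ huv
        constructor
        · intro heq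
          obtain ⟨e, ⟨z, hz, rfl⟩, h1, h2, h3⟩ := H1 heq
          exact ⟨a + z, (hmemT _).mpr (Or.inl ⟨z, hz, rfl⟩), h1, h2, h3⟩
        · intro heq
          obtain ⟨e, ⟨z, hz, rfl⟩, h1, h2, h3⟩ := H2 heq
          exact ⟨a + z, (hmemT _).mpr (Or.inl ⟨z, hz, rfl⟩), h1, h2, h3⟩
      · constructor
        · intro heq
          exact absurd (hl _ (haI x hx) (Or.inl (by simpa using heq))) huv
        · intro heq
          exact absurd (hl _ (haI x hx) (Or.inr (by simpa using heq))) huv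
    · constructor
      · intro heq
        rcases (hmemT v).mp hv with ⟨y, hy, rfl⟩ | rfl
        · exact absurd (hl _ (haI y hy) (Or.inl (by simpa using heq.symm))).symm huv
        · exact absurd rfl huv
      · intro heq
        rcases (hmemT v).mp hv with ⟨y, hy, rfl⟩ | rfl
        · exact absurd (hl _ (haI y hy) (Or.inr (by simpa using heq.symm))).symm huv
        · exact absurd rfl huv
  have hTcond : ∃ δ' : Z2, ∀ y : Z2, δ' ≤ y → y ∈ T := by
    refine ⟨a + e0 + δ, fun y hy => ?_⟩
    have h1 : y - a - e0 ∈ S := by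
      apply hδ
      exact ⟨by have := hy.1; simp only [Prod.fst_add, Prod.fst_sub] at *; omega,
             by have := hy.2; simp only [Prod.snd_add, Prod.snd_sub] at *; omega⟩
    have h2 : e0 + (y - a - e0) ∈ I := hIid e0 he0 _ h1
    refine (hmemT y).mpr (Or.inl ⟨e0 + (y - a - e0), h2, by abel⟩)
  refine ⟨⟨hTorth, h0T, hTadd, hTmin, hTcond, hTg3⟩, ?_⟩
  intro E hE hEI
  obtain ⟨⟨f0, hf0⟩, hEid, hEb, hEmin, hEg3⟩ := hE
  refine ⟨⟨a + f0, ⟨f0, hf0, rfl⟩⟩, ?_, ⟨0, h0T, ?_⟩, ?_, aux_G3P_shift a hEg3⟩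
  · rintro _ ⟨x, hx, rfl⟩ s hs
    rcases (hmemT s).mp hs with ⟨y, hy, rfl⟩ | rfl
    · exact ⟨x + (a + y), hEid x hx _ (haI y hy), by
        simp only [Prod.ext_iff, Prod.fst_add, Prod.snd_add]; constructor <;> omega⟩
    · exact ⟨x, hx, by abel⟩
  · rintro _ ⟨x, hx, rfl⟩
    exact (hmemT _).mpr (Or.inl ⟨x, hEI hx, by rw [zero_add]⟩)
  · rintro _ ⟨x, hx, rfl⟩ _ ⟨y, hy, rfl⟩
    exact ⟨x ⊓ y, hEmin x hx y hy, aux_add_inf a x y⟩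
end
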